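/- arXiv:1403.2587 — 10 statements merged into one kernel-verified Lean document; each statement's English description precedes it below -/
import Mathlib

section
/- The graph G8 obtained by gluing two 4-cycles along a common edge (vertices v1,...,v6 with edges v1v2, v2v3, v4v5, v5v6, v1v4, v2v5, v3v6) is not 2-choosable: there exists an assignment of 2-element colour lists to its vertices admitting no proper colouring in which each vertex is coloured from its list. -/
/-- The graph `G₈`: two 4-cycles `v₁v₂v₅v₄` and `v₂v₃v₆v₅` glued along the edge
`v₂v₅` (vertices `0,…,5` standing for `v₁,…,v₆`). -/
def G8 : SimpleGraph (Fin 6) :=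
  SimpleGraph.fromEdgeSet {s(0, 1), s(1, 2), s(3, 4), s(4, 5), s(0, 3), s(1, 4), s(2, 5)}

/-- `G₈` is not 2-choosable: some assignment of 2-element lists admits no proper
list colouring. -/
theorem G8_not_two_choosable :
    ∃ l : Fin 6 → Finset ℕ, (∀ v, (l v).card = 2) ∧
      ¬ ∃ c : Fin 6 → ℕ, (∀ v, c v ∈ l v) ∧
        ∀ u v, G8.Adj u v → c u ≠ c v := by
  refine ⟨![{1,2},{1,3},{2,3},{2,3},{1,3},{1,2}], by decide, ?_⟩
  rintro ⟨c, hc, hadj⟩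
  have e01 := hadj 0 1 (by simp [G8])
  have e12 := hadj 1 2 (by simp [G8])
  have e34 := hadj 3 4 (by simp [G8])
  have e45 := hadj 4 5 (by simp [G8])
  have e03 := hadj 0 3 (by simp [G8])
  have e14 := hadj 1 4 (by simp [G8])
  have e25 := hadj 2 5 (by simp [G8])
  have h0 := hc 0; have h1 := hc 1; have h2 := hc 2
  have h3 := hc 3; have h4 := hc 4; have h5 := hc 5
  simp at h0 h1 h2 h3 h4 h5
  have h5' : c 5 = 1 ∨ c 5 = 2 := by
    have : (![{1,2},{1,3},{2,3},{2,3},{1,3},{1,2}] : Fin 6 → Finset ℕ) 5 = {1,2} := rfl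
    simpa using h5
  clear h5
  omega
end

section
/- Let G8 be the graph on vertices v1,...,v6 with edges v1v2, v2v3, v4v5, v5v6, v1v4, v2v5, v3v6 (two 4-cycles sharing the edge v2v5). If L is any assignment of 2-element lists to the vertices of G8 such that L(v1) = L(v4), then G8 is L-list colourable. -/
lemma pick2 {s : Finset ℕ} (h : s.card = 2) (x : ℕ) : ∃ y ∈ s, y ≠ x := by
  obtain ⟨a, b, hab, rfl⟩ := Finset.card_eq_two.mp h
  by_cases hax : a = x
  · exact ⟨b, by simp, by rintro rfl; exact hab hax⟩
  · exact ⟨a, by simp, hax⟩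

lemma pickdiff {s t : Finset ℕ} (hs : s.card = 2) (ht : t.card = 2) (hne : t ≠ s) :
    ∃ y ∈ t, y ∉ s := by
  by_contra h
  push_neg at h
  exact hne (Finset.eq_of_subset_of_card_le h (by omega))

lemma C4_choosable (A B C D : Finset ℕ) (hA : A.card = 2) (hB : B.card = 2)
    (hC : C.card = 2) (hD : D.card = 2) :
    ∃ a ∈ A, ∃ b ∈ B, ∃ c ∈ C, ∃ d ∈ D, a ≠ b ∧ b ≠ c ∧ c ≠ d ∧ d ≠ a := by
  by_cases h1 : B = A
  · by_cases h2 : C = B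
    · by_cases h3 : D = C
      · subst h1; subst h2; subst h3
        obtain ⟨x, y, hxy, rfl⟩ := Finset.card_eq_two.mp hA
        exact ⟨x, by simp, y, by simp, x, by simp, y, by simp,
          hxy, hxy.symm, hxy, hxy.symm⟩
      · obtain ⟨d, hd, hdC⟩ := pickdiff hC hD h3
        obtain ⟨a, ha, had⟩ := pick2 hA d
        obtain ⟨b, hb, hba⟩ := pick2 hB a
        obtain ⟨c, hc, hcb⟩ := pick2 hC b
        exact ⟨a, ha, b, hb, c, hc, d, hd, hba.symm, hcb.symm,
          fun h => hdC (h ▸ hc), had.symm⟩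
    · obtain ⟨c, hc, hcB⟩ := pickdiff hB hC h2
      obtain ⟨d, hd, hdc⟩ := pick2 hD c
      obtain ⟨a, ha, had⟩ := pick2 hA d
      obtain ⟨b, hb, hba⟩ := pick2 hB a
      exact ⟨a, ha, b, hb, c, hc, d, hd, hba.symm,
        fun h => hcB (h ▸ hb), hdc.symm, had.symm⟩
  · obtain ⟨b, hb, hbA⟩ := pickdiff hA hB h1
    obtain ⟨c, hc, hcb⟩ := pick2 hC b
    obtain ⟨d, hd, hdc⟩ := pick2 hD c
    obtain ⟨a, ha, had⟩ := pick2 hA d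
    exact ⟨a, ha, b, hb, c, hc, d, hd,
      fun h => hbA (h ▸ ha), hcb.symm, hdc.symm, had.symm⟩

lemma glue {L0 : Finset ℕ} (h : L0.card = 2) {c1 c4 : ℕ} (h14 : c1 ≠ c4) :
    ∃ c0 ∈ L0, ∃ c3 ∈ L0, c0 ≠ c3 ∧ c0 ≠ c1 ∧ c3 ≠ c4 := by
  obtain ⟨a, b, hab, rfl⟩ := Finset.card_eq_two.mp h
  by_cases h1 : c1 = a
  · exact ⟨b, by simp, a, by simp, hab.symm, by rw [h1]; exact hab.symm, h1 ▸ h14⟩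
  · by_cases h2 : c1 = b
    · exact ⟨a, by simp, b, by simp, hab, by rw [h2]; exact hab, h2 ▸ h14⟩
    · by_cases h3 : c4 = a
      · exact ⟨a, by simp, b, by simp, hab, fun h => h1 h.symm, fun h => hab (h3 ▸ h).symm⟩
      · exact ⟨b, by simp, a, by simp, hab.symm, fun h => h2 h.symm, fun h => h3 h.symm⟩

/-- If `L` is a 2-element list assignment for `G₈` with `L v₁ = L v₄`, then `G₈`
is `L`-list colourable. -/
theorem G8_list_colourable_of_eq_lists
    (L : Fin 6 → Finset ℕ) (hcard : ∀ v, (L v).card = 2) (heq : L 0 = L 3) :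
    ∃ c : Fin 6 → ℕ, (∀ v, c v ∈ L v) ∧
      ∀ u v, G8.Adj u v → c u ≠ c v := by
  obtain ⟨c1, hc1, c2, hc2, c5, hc5, c4, hc4, h12, h25, h54, h41⟩ :=
    C4_choosable (L 1) (L 2) (L 5) (L 4) (hcard 1) (hcard 2) (hcard 5) (hcard 4)
  obtain ⟨c0, hc0, c3, hc3, h03, h01, h34⟩ := glue (hcard 0) h41.symm
  refine ⟨![c0, c1, c2, c3, c4, c5], ?_, ?_⟩
  · intro v
    fin_cases v
    · exact hc0
    · exact hc1
    · exact hc2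
    · exact heq ▸ hc3
    · exact hc4
    · exact hc5
  · intro u v h
    rw [G8, SimpleGraph.fromEdgeSet_adj] at h
    obtain ⟨hm, -⟩ := h
    simp only [Set.mem_insert_iff, Set.mem_singleton_iff, Sym2.eq, Sym2.rel_iff',
      Prod.mk.injEq, Prod.swap_prod_mk] at hm
    rcases hm with h'|h'|h'|h'|h'|h'|h' <;> rcases h' with ⟨rfl, rfl⟩|⟨rfl, rfl⟩ <;>
      first
        | exact h01 | exact h01.symm | exact h12 | exact h12.symm
        | exact h34 | exact h34.symm | exact h54 | exact h54.symm
        | exact h03 | exact h03.symm | exact h41 | exact h41.symm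
        | exact h25 | exact h25.symm
end

section
/- Let G be a graph on n vertices with list chromatic number s, and let t be a positive integer with t < s. Suppose that for every induced subgraph H of G one has χ(H) = χ_L(H) (chromatic number equals list chromatic number). Then for every assignment of t-element lists to the vertices of G, there is an induced subgraph of G on at least tn/s vertices that is properly colourable from those lists. -/
/-- `G` is `L`-list colourable: there is a proper colouring with every vertex
coloured from its own list. -/
def ListColourable {V : Type*} (G : SimpleGraph V) (L : V → Finset ℕ) : Prop :=
  ∃ c : V → ℕ, (∀ v, c v ∈ L v) ∧ ∀ u v, G.Adj u v → c u ≠ c v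

/-- `G` is `k`-choosable: `L`-list colourable for every `k`-element list assignment. -/
def Choosable {V : Type*} (G : SimpleGraph V) (k : ℕ) : Prop :=
  ∀ L : V → Finset ℕ, (∀ v, (L v).card = k) → ListColourable G L

/-- The list chromatic number: the least `k` such that `G` is `k`-choosable. -/
noncomputable def listChromaticNumber {V : Type*} (G : SimpleGraph V) : ℕ :=
  sInf {k | Choosable G k}

lemma choosable_mono {V : Type*} (G : SimpleGraph V) {k m : ℕ}
    (h : Choosable G k) (hkm : k ≤ m) : Choosable G m := by
  intro L hLcard
  have hsub : ∀ v, ∃ t ⊆ L v, t.card = k := fun v =>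
    Finset.exists_subset_card_eq (by rw [hLcard v]; exact hkm)
  choose L' hL'sub hL'card using hsub
  obtain ⟨c, hc1, hc2⟩ := h L' hL'card
  exact ⟨c, fun v => hL'sub v (hc1 v), hc2⟩

lemma choosable_card : ∀ (n : ℕ) {V : Type*} [Fintype V] (G : SimpleGraph V),
    Fintype.card V ≤ n → Choosable G n := by
  intro n
  induction n with
  | zero =>
    intro V _ G hcard L hL
    have : IsEmpty V := Fintype.card_eq_zero_iff.mp (Nat.le_zero.mp hcard)
    exact ⟨fun v => 0, fun v => (this.false v).elim, fun u v _ => (this.false u).elim⟩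
  | succ n ih =>
    intro V _ G hcard L hL
    classical
    rcases isEmpty_or_nonempty V with hV | hV
    · exact ⟨fun v => 0, fun v => (hV.false v).elim, fun u v _ => (hV.false u).elim⟩
    · obtain ⟨v₀⟩ := hV
      have hcardV' : Fintype.card {u : V // u ≠ v₀} = Fintype.card V - 1 := by
        have h := Fintype.card_subtype_compl (fun u : V => u = v₀)
        rw [Fintype.card_subtype_eq] at h
        convert h using 2
      have hcard' : Fintype.card {u : V // u ≠ v₀} ≤ n := by omega
      have hsub : ∀ u : {u : V // u ≠ v₀}, ∃ t ⊆ L u.1, t.card = n :=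
        fun u => Finset.exists_subset_card_eq (by rw [hL u.1]; omega)
      choose L' hL'sub hL'card using hsub
      obtain ⟨c', hc'1, hc'2⟩ := ih (G.induce {u | u ≠ v₀}) hcard' L' hL'card
      set used : Finset ℕ := Finset.univ.image c' with hused
      have hne : (L v₀ \ used).Nonempty := by
        rw [← Finset.card_pos]
        have h1 : used.card ≤ Fintype.card {u : V // u ≠ v₀} :=
          Finset.card_image_le.trans (Finset.card_le_univ _)
        have h2 : (L v₀).card - used.card ≤ (L v₀ \ used).card := Finset.le_card_sdiff _ _
        have h3 := hL v₀
        omega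
      obtain ⟨a, ha⟩ := hne
      refine ⟨fun v => if h : v ≠ v₀ then c' ⟨v, h⟩ else a, fun v => ?_, fun u v huv => ?_⟩
      · by_cases h : v ≠ v₀
        · simpa [h] using hL'sub _ (hc'1 ⟨v, h⟩)
        · push_neg at h
          subst h
          simpa using (Finset.mem_sdiff.mp ha).1
      · dsimp only
        by_cases hu : u ≠ v₀ <;> by_cases hv : v ≠ v₀
        · rw [dif_pos hu, dif_pos hv]
          exact hc'2 ⟨u, hu⟩ ⟨v, hv⟩ (by simpa using huv)
        · push_neg at hv
          rw [dif_pos hu, hv, dif_neg (by simp)]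
          intro hEq
          exact (Finset.mem_sdiff.mp ha).2 (hEq ▸ Finset.mem_image_of_mem c' (Finset.mem_univ (α := ({u : V | u ≠ v₀} : Set V)) ⟨u, hu⟩))
        · push_neg at hu
          rw [dif_pos hv, hu, dif_neg (by simp)]
          intro hEq
          exact (Finset.mem_sdiff.mp ha).2 (hEq.symm ▸ Finset.mem_image_of_mem c' (Finset.mem_univ (α := ({u : V | u ≠ v₀} : Set V)) ⟨v, hv⟩))
        · push_neg at hu hv
          rw [hu, hv] at huv
          exact absurd huv (G.loopless.irrefl _)

lemma exists_top_subset {α : Type*} [Fintype α] [DecidableEq α] (f : α → ℕ) :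
    ∀ t : ℕ, t ≤ Fintype.card α → ∃ T : Finset α, T.card = t ∧
      ∀ i ∈ T, ∀ j ∉ T, f j ≤ f i := by
  intro t
  induction t with
  | zero => exact fun _ => ⟨∅, rfl, by simp⟩
  | succ t ih =>
    intro hts
    obtain ⟨T, hTcard, hTtop⟩ := ih (by omega)
    have hne : (Finset.univ \ T).Nonempty := by
      rw [← Finset.card_pos, Finset.card_sdiff_of_subset (Finset.subset_univ T), hTcard,
        Finset.card_univ]
      omega
    obtain ⟨j₀, hj₀mem, hj₀max⟩ := Finset.exists_max_image _ f hne
    have hj₀ : j₀ ∉ T := (Finset.mem_sdiff.mp hj₀mem).2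
    refine ⟨insert j₀ T, by rw [Finset.card_insert_of_notMem hj₀, hTcard], ?_⟩
    intro i hi j hj
    rw [Finset.mem_insert] at hi
    have hjT : j ∉ T := fun h => hj (Finset.mem_insert_of_mem h)
    rcases hi with rfl | hi
    · exact hj₀max j (Finset.mem_sdiff.mpr ⟨Finset.mem_univ j, hjT⟩)
    · exact hTtop i hi j hjT

lemma top_subset_sum {α : Type*} [Fintype α] [DecidableEq α] (f : α → ℕ) (t : ℕ)
    (hts : t ≤ Fintype.card α) : ∃ T : Finset α, T.card = t ∧
      t * ∑ i, f i ≤ Fintype.card α * ∑ i ∈ T, f i := by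
  obtain ⟨T, hTcard, hTtop⟩ := exists_top_subset f t hts
  refine ⟨T, hTcard, ?_⟩
  set s := Fintype.card α
  have hsplit : ∑ i ∈ T, f i + ∑ i ∈ Finset.univ \ T, f i = ∑ i, f i := by
    rw [add_comm]; exact Finset.sum_sdiff (Finset.subset_univ T)
  have hkey : t * ∑ j ∈ Finset.univ \ T, f j ≤ (s - t) * ∑ i ∈ T, f i := by
    calc t * ∑ j ∈ Finset.univ \ T, f j
        = ∑ i ∈ T, ∑ j ∈ Finset.univ \ T, f j := by rw [Finset.sum_const, hTcard, smul_eq_mul]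
      _ ≤ ∑ i ∈ T, ∑ j ∈ Finset.univ \ T, f i := by
          refine Finset.sum_le_sum fun i hi => Finset.sum_le_sum fun j hj => ?_
          exact hTtop i hi j (Finset.mem_sdiff.mp hj).2
      _ = ∑ i ∈ T, (s - t) * f i := by
          refine Finset.sum_congr rfl fun i _ => ?_
          rw [Finset.sum_const, Finset.card_sdiff_of_subset (Finset.subset_univ T), hTcard,
            Finset.card_univ, smul_eq_mul]
      _ = (s - t) * ∑ i ∈ T, f i := by rw [Finset.mul_sum]
  calc t * ∑ i, f i = t * ∑ i ∈ T, f i + t * ∑ j ∈ Finset.univ \ T, f j := by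
        rw [← hsplit]; ring
    _ ≤ t * ∑ i ∈ T, f i + (s - t) * ∑ i ∈ T, f i := by omega
    _ = s * ∑ i ∈ T, f i := by rw [← add_mul]; congr 1; omega

/-- If every induced subgraph of `G` has chromatic number equal to its list
chromatic number, then for every `t`-element list assignment (`0 < t < s = χ_L(G)`)
there is an induced subgraph on at least `t·n/s` vertices properly colourable from
the lists. -/
theorem partial_list_colouring_of_hereditary_chromatic_choosable
    {V : Type*} [Fintype V] (G : SimpleGraph V) (s t : ℕ)
    (hs : listChromaticNumber G = s) (ht : 0 < t) (hts : t < s)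
    (hher : ∀ S : Set V,
      (G.induce S).chromaticNumber = (listChromaticNumber (G.induce S) : ℕ∞))
    (L : V → Finset ℕ) (hL : ∀ v, (L v).card = t) :
    ∃ S : Finset V,
      (t * Fintype.card V : ℚ) / s ≤ S.card ∧
      ∃ c : V → ℕ, (∀ v ∈ S, c v ∈ L v) ∧
        ∀ u ∈ S, ∀ v ∈ S, G.Adj u v → c u ≠ c v := by
  classical
  -- G is s-choosable
  have hGs : Choosable G s := by
    have hne : {k | Choosable G k}.Nonempty := ⟨Fintype.card V, choosable_card _ G le_rfl⟩
    have := Nat.sInf_mem hne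
    rwa [show sInf {k | Choosable G k} = s from hs] at this
  -- extract a proper colouring with colours < s
  obtain ⟨c₀, hc₀mem, hc₀prop⟩ := hGs (fun _ => Finset.range s) (fun _ => Finset.card_range s)
  have hc₀lt : ∀ v, c₀ v < s := fun v => Finset.mem_range.mp (hc₀mem v)
  set F : V → Fin s := fun v => ⟨c₀ v, hc₀lt v⟩ with hF
  set f : Fin s → ℕ := fun i => (Finset.univ.filter (fun v => F v = i)).card with hf
  have hsum : ∑ i, f i = Fintype.card V := by
    rw [← Finset.card_univ]
    exact (Finset.card_eq_sum_card_fiberwise (fun v _ => Finset.mem_univ (F v))).symm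
  obtain ⟨T, hTcard, hTsum⟩ := top_subset_sum f t (by rw [Fintype.card_fin]; omega)
  rw [Fintype.card_fin, hsum] at hTsum
  set S : Finset V := Finset.univ.filter (fun v => F v ∈ T) with hSdef
  have hScard : S.card = ∑ i ∈ T, f i := by
    rw [Finset.card_eq_sum_card_fiberwise (s := S) (t := T) (f := F)
      (fun v hv => (Finset.mem_filter.mp hv).2)]
    refine Finset.sum_congr rfl fun i hi => ?_
    congr 1
    ext v
    simp only [hSdef, Finset.mem_filter, Finset.mem_univ, true_and]
    exact ⟨fun h => h.2, fun h => ⟨h ▸ hi, h⟩⟩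
  -- the size bound
  have hsize : (t * Fintype.card V : ℚ) / s ≤ S.card := by
    rw [div_le_iff₀ (by exact_mod_cast (show 0 < s by omega))]
    have h1 : t * Fintype.card V ≤ s * S.card := by rw [hScard]; exact hTsum
    have h2 : t * Fintype.card V ≤ S.card * s := by rw [Nat.mul_comm S.card s]; exact h1
    exact_mod_cast h2
  -- χ(G[S]) ≤ t
  have hcol : (G.induce (↑S : Set V)).Colorable t := by
    set e := Finset.equivFinOfCardEq hTcard
    refine ⟨SimpleGraph.Coloring.mk
      (fun v => e ⟨F v.1, (Finset.mem_filter.mp (Finset.mem_coe.mp v.2)).2⟩) ?_⟩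
    intro a b hab hEq
    have hadj : G.Adj a.1 b.1 := hab
    apply hc₀prop _ _ hadj
    have := e.injective hEq
    have : F a.1 = F b.1 := congrArg Subtype.val this
    exact congrArg Fin.val this
  have hlist : listChromaticNumber (G.induce (↑S : Set V)) ≤ t := by
    have h1 := hcol.chromaticNumber_le
    rw [hher (↑S : Set V)] at h1
    exact_mod_cast h1
  have hchoose : Choosable (G.induce (↑S : Set V)) t := by
    have hne : {k | Choosable (G.induce (↑S : Set V)) k}.Nonempty :=
      ⟨Fintype.card ↥(↑S : Set V), choosable_card _ _ le_rfl⟩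
    exact choosable_mono _ (Nat.sInf_mem hne) hlist
  obtain ⟨c', hc'1, hc'2⟩ := hchoose (fun v => L v.1) (fun v => hL v.1)
  refine ⟨S, hsize, fun v => if h : v ∈ S then c' ⟨v, Finset.mem_coe.mpr h⟩ else 0,
    fun v hv => ?_, fun u hu v hv huv => ?_⟩
  · dsimp only; rw [dif_pos hv]; exact hc'1 _
  · dsimp only; rw [dif_pos hu, dif_pos hv]
    exact hc'2 _ _ huv
end

section
/- Let G be a chordal graph on n vertices with list chromatic number s and let t be a positive integer with t < s. Then for every assignment L of t-element colour lists to the vertices of G, there exists an induced subgraph of G on at least tn/s vertices that is L-list colourable. -/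
/-- `G` is chordal: it has no induced cycle of length greater than 3. -/
def IsChordal {V : Type*} (G : SimpleGraph V) : Prop :=
  ∀ n : ℕ, 4 ≤ n → IsEmpty (SimpleGraph.cycleGraph n ↪g G)

open Finset in
/-- Selection of `t` colour classes with large total size. -/
lemma exists_big_classes (s t : ℕ) (hts : t ≤ s) (f : ℕ → ℕ) :
    ∃ T ⊆ range s, T.card = t ∧
      t * (∑ i ∈ range s, f i) ≤ s * ∑ i ∈ T, f i := by
  classical
  -- take T maximizing the sum among t-subsets
  have hne : ((range s).powersetCard t).Nonempty := by
    apply Finset.powersetCard_nonempty.mpr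
    simpa using hts
  obtain ⟨T, hT, hTmax⟩ := Finset.exists_max_image _ (fun T => ∑ i ∈ T, f i) hne
  rw [Finset.mem_powersetCard] at hT
  obtain ⟨hTsub, hTcard⟩ := hT
  refine ⟨T, hTsub, hTcard, ?_⟩
  -- every class outside T is at most every class inside T
  have hdom : ∀ j ∈ range s \ T, ∀ i ∈ T, f j ≤ f i := by
    intro j hj i hi
    by_contra hlt
    push_neg at hlt
    have hjT : j ∉ T := (Finset.mem_sdiff.mp hj).2
    set T' := insert j (T.erase i) with hT'
    have hT'mem : T' ∈ (range s).powersetCard t := by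
      rw [Finset.mem_powersetCard]
      constructor
      · intro x hx
        rcases Finset.mem_insert.mp hx with rfl | hx
        · exact (Finset.mem_sdiff.mp hj).1
        · exact hTsub (Finset.mem_of_mem_erase hx)
      · rw [Finset.card_insert_of_notMem (fun h => hjT (Finset.mem_of_mem_erase h)),
          Finset.card_erase_of_mem hi, hTcard]
        have ht1 : 0 < t := hTcard ▸ Finset.card_pos.mpr ⟨i, hi⟩
        omega
    have hsum : ∑ k ∈ T, f k < ∑ k ∈ T', f k := by
      rw [hT', Finset.sum_insert (fun h => hjT (Finset.mem_of_mem_erase h))]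
      rw [← Finset.add_sum_erase T f hi]
      exact Nat.add_lt_add_right hlt _
    exact absurd (hTmax T' hT'mem) (by omega)
  -- now sum it up
  have h1 : t * ∑ j ∈ range s \ T, f j ≤ (s - t) * ∑ i ∈ T, f i := by
    calc t * ∑ j ∈ range s \ T, f j = ∑ j ∈ range s \ T, t * f j := by
          rw [Finset.mul_sum]
      _ = ∑ j ∈ range s \ T, ∑ i ∈ T, f j := by
          refine Finset.sum_congr rfl fun j hj => ?_
          rw [Finset.sum_const, hTcard, smul_eq_mul, mul_comm]
      _ ≤ ∑ j ∈ range s \ T, ∑ i ∈ T, f i := by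
          refine Finset.sum_le_sum fun j hj => Finset.sum_le_sum fun i hi => hdom j hj i hi
      _ = (s - t) * ∑ i ∈ T, f i := by
          rw [Finset.sum_const, Finset.card_sdiff_of_subset hTsub, Finset.card_range, hTcard,
            smul_eq_mul]
  have hsplit : ∑ i ∈ range s, f i = ∑ i ∈ T, f i + ∑ j ∈ range s \ T, f j := by
    rw [add_comm, Finset.sum_sdiff hTsub]
  rw [hsplit]
  have hst : t + (s - t) = s := by omega
  calc t * (∑ i ∈ T, f i + ∑ j ∈ range s \ T, f j)
      = t * ∑ i ∈ T, f i + t * ∑ j ∈ range s \ T, f j := by ring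
    _ ≤ t * ∑ i ∈ T, f i + (s - t) * ∑ i ∈ T, f i := by omega
    _ = s * ∑ i ∈ T, f i := by rw [← add_mul, hst]

section Chordal

variable {V : Type*} {G : SimpleGraph V}

/-- reachability within a set of vertices -/
def ReachIn (G : SimpleGraph V) (A : Set V) (u v : V) : Prop :=
  ∃ p : G.Walk u v, ∀ x ∈ p.support, x ∈ A

/-- `v` is simplicial within `A`. -/
def SimpIn (G : SimpleGraph V) (A : Finset V) (v : V) : Prop :=
  ∀ x ∈ A, ∀ y ∈ A, G.Adj v x → G.Adj v y → x ≠ y → G.Adj x y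

open SimpleGraph Walk in
lemma support_get_eq_getVert {u v : V} (p : G.Walk u v) (i : ℕ)
    (h : i < p.support.length) : p.support.get ⟨i, h⟩ = p.getVert i := by
  induction p generalizing i with
  | nil =>
    simp only [Walk.support_nil, List.length_singleton] at h
    interval_cases i
    rfl
  | cons hadj p ih =>
    rcases i with _ | i
    · rfl
    · simp only [Walk.support_cons, List.length_cons] at h
      have := ih i (by omega)
      simpa [Walk.support_cons] using this

open SimpleGraph Walk in
lemma getVert_injOn' {u v : V} (p : G.Walk u v) (hnd : p.support.Nodup)
    {i j : ℕ} (hi : i ≤ p.length) (hj : j ≤ p.length)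
    (hij : p.getVert i = p.getVert j) : i = j := by
  have hl : p.support.length = p.length + 1 := Walk.length_support p
  have h1 : i < p.support.length := by omega
  have h2 : j < p.support.length := by omega
  have := (List.Nodup.get_inj_iff hnd (i := ⟨i, h1⟩) (j := ⟨j, h2⟩)).mp
  rw [support_get_eq_getVert p i h1, support_get_eq_getVert p j h2] at this
  simpa using this hij

open SimpleGraph Walk in
lemma getVert_mem_support {u v : V} (p : G.Walk u v) {i : ℕ} (hi : i ≤ p.length) :
    p.getVert i ∈ p.support :=
  Walk.mem_support_iff_exists_getVert.mpr ⟨i, rfl, hi⟩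

open SimpleGraph Walk in
lemma getVert_takeUntil_length [DecidableEq V] {u v w : V} (p : G.Walk u v)
    (h : w ∈ p.support) : p.getVert (p.takeUntil w h).length = w := by
  have key : ((p.takeUntil w h).append (p.dropUntil w h)).getVert
      (p.takeUntil w h).length = w := by
    rw [Walk.getVert_append]
    simp
  rwa [Walk.take_spec p h] at key

open SimpleGraph Walk in
lemma length_takeUntil_getVert [DecidableEq V] {u v : V} (p : G.Walk u v)
    (hnd : p.support.Nodup) {i : ℕ} (hi : i ≤ p.length)
    (h : p.getVert i ∈ p.support) : (p.takeUntil _ h).length = i := by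
  apply getVert_injOn' p hnd _ hi
  · exact getVert_takeUntil_length p h
  · exact Walk.length_takeUntil_le p h

open SimpleGraph Walk in
/-- From any walk from `x` to `y` whose support stays in `{x, y} ∪ C`, extract a
chordless induced path with the same property. -/
lemma exists_chordless_route [DecidableEq V] {x y : V} (C : Set V)
    (p₀ : G.Walk x y) (hp₀ : ∀ z ∈ p₀.support, z = x ∨ z = y ∨ z ∈ C) :
    ∃ p : G.Walk x y, (∀ z ∈ p.support, z = x ∨ z = y ∨ z ∈ C) ∧ p.support.Nodup ∧
      ∀ i j, i ≤ p.length → j ≤ p.length → G.Adj (p.getVert i) (p.getVert j) →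
        i = j + 1 ∨ j = i + 1 := by
  classical
  set Pred : G.Walk x y → Prop := fun p => ∀ z ∈ p.support, z = x ∨ z = y ∨ z ∈ C with hPred
  set Lset : Set ℕ := {n | ∃ p : G.Walk x y, Pred p ∧ p.length = n} with hLset
  have hLne : Lset.Nonempty := ⟨p₀.length, p₀, hp₀, rfl⟩
  obtain ⟨p, hp, hplen⟩ := Nat.sInf_mem hLne
  have hmin : ∀ r : G.Walk x y, Pred r → p.length ≤ r.length := by
    intro r hr
    rw [hplen]
    exact Nat.sInf_le ⟨r, hr, rfl⟩
  set q := p.bypass with hq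
  have hqP : Pred q := fun z hz => hp z (Walk.support_bypass_subset p hz)
  have hqnd : q.support.Nodup := (Walk.bypass_isPath p).support_nodup
  have hqmin : ∀ r : G.Walk x y, Pred r → q.length ≤ r.length := by
    intro r hr
    exact le_trans (Walk.length_bypass_le p) (hmin r hr)
  refine ⟨q, hqP, hqnd, ?_⟩
  -- one-sided bound from the shortcut argument
  have onesided : ∀ i j, i ≤ q.length → j ≤ q.length →
      G.Adj (q.getVert i) (q.getVert j) → j ≤ i + 1 := by
    intro i j hi hj hadj
    have hu : q.getVert i ∈ q.support := getVert_mem_support q hi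
    have hv : q.getVert j ∈ q.support := getVert_mem_support q hj
    set r : G.Walk x y := (q.takeUntil _ hu).append (Walk.cons hadj (q.dropUntil _ hv))
      with hr
    have hrsup : ∀ z ∈ r.support, z ∈ q.support := by
      intro z hz
      rw [hr, Walk.mem_support_append_iff] at hz
      rcases hz with hz | hz
      · exact Walk.support_takeUntil_subset q hu hz
      · rw [Walk.support_cons] at hz
        rcases List.mem_cons.mp hz with rfl | hz
        · exact hu
        · exact Walk.support_dropUntil_subset q hv hz
    have hrP : Pred r := fun z hz => hqP z (hrsup z hz)
    have hlen : r.length = i + 1 + (q.dropUntil _ hv).length := by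
      rw [hr, Walk.length_append, Walk.length_cons,
        length_takeUntil_getVert q hqnd hi]
      omega
    have hsplit : (q.takeUntil _ hv).length + (q.dropUntil _ hv).length = q.length := by
      conv_rhs => rw [← Walk.take_spec q hv]
      rw [Walk.length_append]
    rw [length_takeUntil_getVert q hqnd hj] at hsplit
    have := hqmin r hrP
    omega
  intro i j hi hj hadj
  have h1 := onesided i j hi hj hadj
  have h2 := onesided j i hj hi hadj.symm
  have hne : i ≠ j := by
    rintro rfl
    exact G.irrefl hadj
  omega

open SimpleGraph Walk in
/-- Two internally disjoint chordless routes between nonadjacent `x` and `y`,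
through sets with no edges between them, give an induced cycle: contradiction
with chordality. -/
lemma no_two_routes (hG : IsChordal G) {x y : V} {Ca Cb : Set V}
    (hxy : x ≠ y) (hnadj : ¬G.Adj x y)
    (hCab : ∀ u ∈ Ca, u ∉ Cb) (hnoedge : ∀ u ∈ Ca, ∀ v ∈ Cb, ¬G.Adj u v)
    (hxCa : x ∉ Ca) (hxCb : x ∉ Cb) (hyCa : y ∉ Ca) (hyCb : y ∉ Cb)
    (p : G.Walk x y) (q : G.Walk x y)
    (hpint : ∀ z ∈ p.support, z = x ∨ z = y ∨ z ∈ Ca)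
    (hqint : ∀ z ∈ q.support, z = x ∨ z = y ∨ z ∈ Cb)
    (hpN : p.support.Nodup) (hqN : q.support.Nodup)
    (hpc : ∀ i j, i ≤ p.length → j ≤ p.length → G.Adj (p.getVert i) (p.getVert j) →
        i = j + 1 ∨ j = i + 1)
    (hqc : ∀ i j, i ≤ q.length → j ≤ q.length → G.Adj (q.getVert i) (q.getVert j) →
        i = j + 1 ∨ j = i + 1) : False := by
  classical
  have hlen2 : ∀ r : G.Walk x y, 2 ≤ r.length := by
    intro r
    by_contra h
    push_neg at h
    interval_cases hr : r.length
    · exact hxy (Walk.eq_of_length_eq_zero hr)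
    · have hadj := r.adj_getVert_succ (i := 0) (by omega)
      rw [r.getVert_zero] at hadj
      rw [show (0 + 1 : ℕ) = r.length by omega, r.getVert_length] at hadj
      exact hnadj hadj
  have hka2 : 2 ≤ p.length := hlen2 p
  have hkb2 : 2 ≤ q.length := hlen2 q
  -- interior vertices lie in the respective sets
  have hpin : ∀ i, 0 < i → i < p.length → p.getVert i ∈ Ca := by
    intro i h0 hik
    rcases hpint _ (getVert_mem_support p (le_of_lt hik)) with h | h | h
    · exfalso
      have h' : p.getVert i = p.getVert 0 := h.trans p.getVert_zero.symm
      have := getVert_injOn' p hpN (by omega) (by omega) h'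
      omega
    · exfalso
      have h' : p.getVert i = p.getVert p.length := h.trans p.getVert_length.symm
      have := getVert_injOn' p hpN (by omega) (by omega) h'
      omega
    · exact h
  have hqin : ∀ i, 0 < i → i < q.length → q.getVert i ∈ Cb := by
    intro i h0 hik
    rcases hqint _ (getVert_mem_support q (le_of_lt hik)) with h | h | h
    · exfalso
      have h' : q.getVert i = q.getVert 0 := h.trans q.getVert_zero.symm
      have := getVert_injOn' q hqN (by omega) (by omega) h'
      omega
    · exfalso
      have h' : q.getVert i = q.getVert q.length := h.trans q.getVert_length.symm
      have := getVert_injOn' q hqN (by omega) (by omega) h'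
      omega
    · exact h
  set ka := p.length with hka
  set kb := q.length with hkb
  obtain ⟨m', hm⟩ : ∃ m', ka + kb = m' + 2 := ⟨ka + kb - 2, by omega⟩
  have hm4 : 4 ≤ m' + 2 := by omega
  have hm0 : 0 < m' + 2 := by omega
  -- the cyclic arrangement of vertices
  set f : Fin (m' + 2) → V := fun i => if i.val ≤ ka then p.getVert i.val
    else q.getVert ((m' + 2) - i.val) with hff
  have hfp : ∀ i : Fin (m' + 2), i.val ≤ ka → f i = p.getVert i.val := by
    intro i h; rw [hff]; simp [h]
  have hfq : ∀ i : Fin (m' + 2), ka < i.val → f i = q.getVert ((m' + 2) - i.val) := by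
    intro i h; rw [hff]; simp [Nat.not_le.mpr h]
  have hqrange : ∀ i : Fin (m' + 2), ka < i.val → 1 ≤ (m' + 2) - i.val ∧ (m' + 2) - i.val ≤ kb - 1 := by
    intro i h
    have := i.isLt
    omega
  -- special values
  have hfx : f ⟨0, hm0⟩ = x := by
    rw [hfp ⟨0, hm0⟩ (by simp), p.getVert_zero]
  have hfxq : f ⟨0, hm0⟩ = q.getVert 0 := by rw [hfx, q.getVert_zero]
  have hfy : ∀ i : Fin (m' + 2), i.val = ka → f i = q.getVert kb := by
    intro i h
    rw [hfp i (le_of_eq h), h, hka, p.getVert_length, hkb, q.getVert_length]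
  -- Fin (m' + 2) addition facts
  have haddval : ∀ i : Fin (m' + 2), (i + 1).val = (i.val + 1) % (m' + 2) := by
    intro i
    rw [Fin.add_def, Fin.val_one]
  have hadd1 : ∀ i : Fin (m' + 2), i.val < (m' + 2) - 1 → (i + 1).val = i.val + 1 := by
    intro i h
    rw [haddval i, Nat.mod_eq_of_lt (by omega)]
  have hadd2 : ∀ i : Fin (m' + 2), i.val = (m' + 2) - 1 → (i + 1).val = 0 := by
    intro i h
    rw [haddval i, h, show (m' + 2) - 1 + 1 = (m' + 2) by omega, Nat.mod_self]
  -- injectivity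
  have finj : Function.Injective f := by
    intro i j hij
    have hi := i.isLt
    have hj := j.isLt
    by_cases h1 : i.val ≤ ka <;> by_cases h2 : j.val ≤ ka
    · rw [hfp i h1, hfp j h2] at hij
      exact Fin.ext (getVert_injOn' p hpN (by omega) (by omega) hij)
    · exfalso
      rw [hfp i h1, hfq j (by omega)] at hij
      obtain ⟨hr1, hr2⟩ := hqrange j (by omega)
      have hjCb : q.getVert ((m' + 2) - j.val) ∈ Cb := hqin _ (by omega) (by omega)
      rw [← hij] at hjCb
      rcases hpint _ (getVert_mem_support p h1) with h | h | h
      · rw [h] at hjCb; exact hxCb hjCb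
      · rw [h] at hjCb; exact hyCb hjCb
      · exact hCab _ h hjCb
    · exfalso
      rw [hfp j h2, hfq i (by omega)] at hij
      obtain ⟨hr1, hr2⟩ := hqrange i (by omega)
      have hiCb : q.getVert ((m' + 2) - i.val) ∈ Cb := hqin _ (by omega) (by omega)
      rw [hij] at hiCb
      rcases hpint _ (getVert_mem_support p h2) with h | h | h
      · rw [h] at hiCb; exact hxCb hiCb
      · rw [h] at hiCb; exact hyCb hiCb
      · exact hCab _ h hiCb
    · rw [hfq i (by omega), hfq j (by omega)] at hij
      obtain ⟨hr1, hr2⟩ := hqrange i (by omega)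
      obtain ⟨hr3, hr4⟩ := hqrange j (by omega)
      have := getVert_injOn' q hqN (i := (m' + 2) - i.val) (j := (m' + 2) - j.val)
        (by omega) (by omega) hij
      exact Fin.ext (by omega)
  -- successive vertices are adjacent
  have h1 : ∀ i : Fin (m' + 2), G.Adj (f i) (f (i + 1)) := by
    intro i
    have hi := i.isLt
    by_cases hc1 : i.val < ka
    · have hv : (i + 1).val = i.val + 1 := hadd1 i (by omega)
      rw [hfp i (by omega), hfp (i + 1) (by omega), hv]
      exact p.adj_getVert_succ (by omega)
    by_cases hc2 : i.val = ka
    · have hv : (i + 1).val = ka + 1 := by rw [hadd1 i (by omega), hc2]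
      rw [hfy i hc2, hfq (i + 1) (by omega), hv, show (m' + 2) - (ka + 1) = kb - 1 by omega]
      have hadj := q.adj_getVert_succ (i := kb - 1) (by omega)
      rw [show kb - 1 + 1 = kb by omega] at hadj
      exact hadj.symm
    by_cases hc3 : i.val < (m' + 2) - 1
    · have hv : (i + 1).val = i.val + 1 := hadd1 i hc3
      rw [hfq i (by omega), hfq (i + 1) (by omega), hv]
      have hadj := q.adj_getVert_succ (i := (m' + 2) - (i.val + 1)) (by omega)
      rw [show (m' + 2) - (i.val + 1) + 1 = (m' + 2) - i.val by omega] at hadj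
      exact hadj.symm
    · have hiv : i.val = (m' + 2) - 1 := by omega
      have hv : (i + 1).val = 0 := hadd2 i hiv
      have : f (i + 1) = f ⟨0, hm0⟩ := by congr 1; exact Fin.ext hv
      rw [this, hfxq, hfq i (by omega), hiv, show (m' + 2) - ((m' + 2) - 1) = 1 by omega]
      have hadj := q.adj_getVert_succ (i := 0) (by omega)
      rw [show (0 + 1 : ℕ) = 1 by omega] at hadj
      exact hadj.symm
  -- no chords
  have hmix : ∀ i j : Fin (m' + 2), i.val ≤ ka → ka < j.val → G.Adj (f i) (f j) →
      i = j + 1 ∨ j = i + 1 := by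
    intro i j hi hj hadj
    obtain ⟨hr1, hr2⟩ := hqrange j hj
    have hjv := j.isLt
    rw [hfq j hj] at hadj
    rcases Nat.lt_or_ge 0 i.val with h0 | h0
    · rcases Nat.lt_or_ge i.val ka with hik | hik
      · exfalso
        rw [hfp i hi] at hadj
        exact hnoedge _ (hpin i.val h0 hik) _ (hqin _ (by omega) (by omega)) hadj
      · -- i.val = ka, f i = y = q.getVert kb
        rw [hfy i (by omega)] at hadj
        rcases hqc kb ((m' + 2) - j.val) (by omega) (by omega) hadj with h | h
        · right
          apply Fin.ext
          rw [hadd1 i (by omega)]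
          omega
        · omega
    · -- i.val = 0, f i = x = q.getVert 0
      have hi0 : i = ⟨0, hm0⟩ := Fin.ext (show i.val = 0 by omega)
      rw [hi0, hfxq] at hadj
      rcases hqc 0 ((m' + 2) - j.val) (by omega) (by omega) hadj with h | h
      · omega
      · left
        apply Fin.ext
        rw [hadd2 j (by omega), hi0]
  have h2 : ∀ i j : Fin (m' + 2), G.Adj (f i) (f j) → i = j + 1 ∨ j = i + 1 := by
    intro i j hadj
    have hi := i.isLt
    have hj := j.isLt
    by_cases hc1 : i.val ≤ ka <;> by_cases hc2 : j.val ≤ ka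
    · rw [hfp i hc1, hfp j hc2] at hadj
      rcases hpc i.val j.val (by omega) (by omega) hadj with h | h
      · left
        apply Fin.ext
        rw [hadd1 j (by omega)]
        omega
      · right
        apply Fin.ext
        rw [hadd1 i (by omega)]
        omega
    · exact hmix i j hc1 (by omega) hadj
    · exact (hmix j i hc2 (by omega) hadj.symm).symm
    · obtain ⟨hr1, hr2⟩ := hqrange i (by omega)
      obtain ⟨hr3, hr4⟩ := hqrange j (by omega)
      rw [hfq i (by omega), hfq j (by omega)] at hadj
      rcases hqc ((m' + 2) - i.val) ((m' + 2) - j.val) (by omega) (by omega) hadj with h | h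
      · right
        apply Fin.ext
        rw [hadd1 i (by omega)]
        omega
      · left
        apply Fin.ext
        rw [hadd1 j (by omega)]
        omega
  -- build the embedding
  have emb : SimpleGraph.cycleGraph (m' + 2) ↪g G := by
    refine ⟨⟨f, finj⟩, ?_⟩
    intro a b
    rw [Function.Embedding.coeFn_mk, SimpleGraph.cycleGraph_adj]
    constructor
    · intro hadj
      rcases h2 a b hadj with h | h
      · left; rw [h]; abel
      · right; rw [h]; abel
    · intro hd
      rcases hd with h | h
      · have ha : a = b + 1 := by
          rw [← h]; abel
        rw [ha]
        exact (h1 b).symm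
      · have hb : b = a + 1 := by
          rw [← h]; abel
        rw [hb]
        exact h1 a
  exact (hG (m' + 2) hm4).false emb

/-- membership along walks -/
lemma reachin_mem {A : Set V} {u v : V} (h : ReachIn G A u v) : v ∈ A := by
  obtain ⟨p, hp⟩ := h
  exact hp v p.end_mem_support

lemma reachin_refl {A : Set V} {u : V} (h : u ∈ A) : ReachIn G A u u :=
  ⟨SimpleGraph.Walk.nil, by simpa using h⟩

lemma reachin_symm {A : Set V} {u v : V} (h : ReachIn G A u v) : ReachIn G A v u := by
  obtain ⟨p, hp⟩ := h
  exact ⟨p.reverse, fun z hz => hp z (by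
    rw [SimpleGraph.Walk.support_reverse, List.mem_reverse] at hz; exact hz)⟩

lemma reachin_trans {A : Set V} {u v w : V} (h1 : ReachIn G A u v)
    (h2 : ReachIn G A v w) : ReachIn G A u w := by
  obtain ⟨p, hp⟩ := h1
  obtain ⟨q, hq⟩ := h2
  refine ⟨p.append q, fun z hz => ?_⟩
  rw [SimpleGraph.Walk.mem_support_append_iff] at hz
  rcases hz with hz | hz
  · exact hp z hz
  · exact hq z hz

lemma reachin_adj {A : Set V} {u v : V} (hu : u ∈ A) (hv : v ∈ A)
    (h : G.Adj u v) : ReachIn G A u v :=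
  ⟨SimpleGraph.Walk.cons h SimpleGraph.Walk.nil, by
    intro z hz
    simp only [SimpleGraph.Walk.support_cons, SimpleGraph.Walk.support_nil,
      List.mem_cons, List.mem_singleton, List.not_mem_nil, or_false] at hz
    rcases hz with rfl | rfl
    · exact hu
    · exact hv⟩

lemma reachin_prefix [DecidableEq V] {A : Set V} {u v z : V} (p : G.Walk u v)
    (hp : ∀ x ∈ p.support, x ∈ A) (hz : z ∈ p.support) : ReachIn G A u z :=
  ⟨p.takeUntil z hz, fun x hx => hp x (SimpleGraph.Walk.support_takeUntil_subset p hz hx)⟩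

open Finset in
/-- Dirac: every nonempty finite piece of a chordal graph is a clique or has two
nonadjacent simplicial vertices. -/
theorem dirac [Fintype V] [DecidableEq V] (hG : IsChordal G) (A : Finset V)
    (hA : A.Nonempty) :
    (∀ x ∈ A, ∀ y ∈ A, x ≠ y → G.Adj x y) ∨
      ∃ u ∈ A, ∃ v ∈ A, u ≠ v ∧ ¬G.Adj u v ∧ SimpIn G A u ∧ SimpIn G A v := by
  classical
  induction A using Finset.strongInduction with
  | _ A ih =>
  by_cases hclq : ∀ x ∈ A, ∀ y ∈ A, x ≠ y → G.Adj x y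
  · exact Or.inl hclq
  right
  push_neg at hclq
  obtain ⟨a, haA, b, hbA, hab, hnadjab⟩ := hclq
  -- separators
  set issep : Finset V → Prop := fun S => a ∉ S ∧ b ∉ S ∧
    ¬ ReachIn G (↑(A \ S) : Set V) a b with hissep
  have hS0 : issep (A \ {a, b}) := by
    refine ⟨by simp [haA], by simp [hbA], ?_⟩
    rintro ⟨p, hp⟩
    have hsub : ∀ z ∈ p.support, z = a ∨ z = b := by
      intro z hz
      have := hp z hz
      simp only [coe_sdiff, Set.mem_diff, mem_coe, mem_sdiff, not_and, not_not] at this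
      have h2 := this.2 this.1
      simpa using h2
    cases p with
    | nil => exact hab rfl
    | cons hadj q =>
      rcases hsub _ (by
        rw [SimpleGraph.Walk.support_cons]
        exact List.mem_cons_of_mem _ q.start_mem_support) with h | h
      · exact G.irrefl (h ▸ hadj)
      · exact hnadjab (h ▸ hadj)
  have hSne : (A.powerset.filter issep).Nonempty :=
    ⟨A \ {a, b}, mem_filter.mpr ⟨mem_powerset.mpr sdiff_subset, hS0⟩⟩
  obtain ⟨S, hSmem, hSmin⟩ := Finset.exists_min_image _ Finset.card hSne
  obtain ⟨hSsub', ⟨haS, hbS, hSnoreach⟩⟩ :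
      S ∈ A.powerset ∧ issep S := Finset.mem_filter.mp hSmem
  have hSsub : S ⊆ A := mem_powerset.mp hSsub'
  set A' : Set V := (↑(A \ S) : Set V) with hA'
  have hmemA' : ∀ z, z ∈ A' ↔ z ∈ A ∧ z ∉ S := by
    intro z
    rw [hA']
    simp
  have haA' : a ∈ A' := (hmemA' a).mpr ⟨haA, haS⟩
  have hbA' : b ∈ A' := (hmemA' b).mpr ⟨hbA, hbS⟩
  set Ca : Set V := {z | ReachIn G A' a z} with hCa
  set Cb : Set V := {z | ReachIn G A' b z} with hCb
  have hCaA' : ∀ z ∈ Ca, z ∈ A' := fun z hz => reachin_mem hz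
  have hCbA' : ∀ z ∈ Cb, z ∈ A' := fun z hz => reachin_mem hz
  have haCa : a ∈ Ca := reachin_refl haA'
  have hbCb : b ∈ Cb := reachin_refl hbA'
  have hdisj : ∀ u ∈ Ca, u ∉ Cb := fun u hu hub =>
    hSnoreach (reachin_trans hu (reachin_symm hub))
  have hclosed_a : ∀ u ∈ Ca, ∀ v, v ∈ A' → G.Adj u v → v ∈ Ca :=
    fun u hu v hv hadj => reachin_trans hu (reachin_adj (hCaA' u hu) hv hadj)
  have hclosed_b : ∀ u ∈ Cb, ∀ v, v ∈ A' → G.Adj u v → v ∈ Cb :=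
    fun u hu v hv hadj => reachin_trans hu (reachin_adj (hCbA' u hu) hv hadj)
  have hnoedge : ∀ u ∈ Ca, ∀ v ∈ Cb, ¬ G.Adj u v := fun u hu v hv hadj =>
    hdisj v (hclosed_a u hu v (hCbA' v hv) hadj) hv
  have haCb : a ∉ Cb := fun h => hSnoreach (reachin_symm h)
  have hbCa : b ∉ Ca := fun h => hSnoreach h
  -- every separator vertex has neighbours in both components
  have hnbr : ∀ x ∈ S, (∃ z ∈ Ca, G.Adj x z) ∧ (∃ z ∈ Cb, G.Adj x z) := by
    intro x hxS
    have hxerase : ¬ issep (S.erase x) := by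
      intro hcontra
      have hmem : S.erase x ∈ A.powerset.filter issep :=
        mem_filter.mpr ⟨mem_powerset.mpr ((erase_subset x S).trans hSsub), hcontra⟩
      have hle := hSmin _ hmem
      have := Finset.card_erase_of_mem hxS
      have hpos : 0 < S.card := Finset.card_pos.mpr ⟨x, hxS⟩
      omega
    have hreach : ReachIn G (↑(A \ S.erase x) : Set V) a b := by
      by_contra h
      exact hxerase ⟨fun h' => haS (Finset.mem_of_mem_erase h'),
        fun h' => hbS (Finset.mem_of_mem_erase h'), h⟩
    obtain ⟨w, hw⟩ := hreach
    have hmemAx : ∀ z, z ∈ (↑(A \ S.erase x) : Set V) ↔ z ∈ A ∧ z ∉ S.erase x := by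
      intro z
      simp only [Finset.coe_sdiff, Set.mem_diff, Finset.mem_coe]
    have hxw : x ∈ w.support := by
      by_contra hxw
      apply hSnoreach
      refine ⟨w, fun z hz => ?_⟩
      have h1 := (hmemAx z).mp (hw z hz)
      refine (hmemA' z).mpr ⟨h1.1, fun hzS => ?_⟩
      exact h1.2 (Finset.mem_erase.mpr ⟨fun h => hxw (h ▸ hz), hzS⟩)
    -- generic: from any walk ending at x inside A \ S.erase x, get a neighbour of x
    -- reachable from the start in A'
    have findnbr : ∀ (c : V), c ≠ x → ∀ (w' : G.Walk c x),
        (∀ z ∈ w'.support, z ∈ (↑(A \ S.erase x) : Set V)) →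
        ∃ z, ReachIn G A' c z ∧ G.Adj x z := by
      intro c hcx w' hw'
      set t := w'.takeUntil x w'.end_mem_support with ht
      have htsup : ∀ z ∈ t.support, z ∈ (↑(A \ S.erase x) : Set V) :=
        fun z hz => hw' z (SimpleGraph.Walk.support_takeUntil_subset _ _ hz)
      have hcount : t.support.count x = 1 :=
        w'.count_support_takeUntil_eq_one w'.end_mem_support
      set tr := t.reverse with htr
      have htrsup : tr.support = t.support.reverse := SimpleGraph.Walk.support_reverse t
      have hnotnil : ¬ tr.Nil := by
        intro hnil
        rw [SimpleGraph.Walk.nil_iff_length_eq, SimpleGraph.Walk.length_reverse] at hnil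
        exact hcx (SimpleGraph.Walk.eq_of_length_eq_zero hnil)
      have hadjz : G.Adj x (tr.getVert 1) := tr.adj_snd hnotnil
      have htail : tr.tail.support = tr.support.tail :=
        SimpleGraph.Walk.support_tail_of_not_nil tr hnotnil
      have hxnot : x ∉ tr.support.tail := by
        have hcount' : tr.support.count x = 1 := by
          rw [htrsup, List.count_reverse]
          exact hcount
        rw [SimpleGraph.Walk.support_eq_cons tr] at hcount'
        simp only [List.count_cons_self] at hcount'
        intro hmem
        have := List.count_pos_iff.mpr hmem
        omega
      refine ⟨tr.getVert 1, ⟨tr.tail.reverse, ?_⟩, hadjz⟩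
      intro u hu
      rw [SimpleGraph.Walk.support_reverse, List.mem_reverse, htail] at hu
      have hu1 : u ∈ t.support := by
        rw [htrsup] at hu
        exact List.mem_reverse.mp (List.mem_of_mem_tail hu)
      have h1 := (hmemAx u).mp (htsup u hu1)
      refine (hmemA' u).mpr ⟨h1.1, fun huS => ?_⟩
      exact h1.2 (Finset.mem_erase.mpr ⟨fun h => hxnot (h ▸ hu), huS⟩)
    constructor
    · have hax : a ≠ x := fun h => haS (h ▸ hxS)
      obtain ⟨z, hz, hadj⟩ := findnbr a hax (w.takeUntil x hxw)
        (fun z hz => hw z (SimpleGraph.Walk.support_takeUntil_subset _ _ hz))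
      exact ⟨z, hz, hadj⟩
    · have hbx : b ≠ x := fun h => hbS (h ▸ hxS)
      obtain ⟨z, hz, hadj⟩ := findnbr b hbx (w.dropUntil x hxw).reverse
        (fun z hz => hw z (SimpleGraph.Walk.support_dropUntil_subset _ hxw
          (by rwa [SimpleGraph.Walk.support_reverse, List.mem_reverse] at hz)))
      exact ⟨z, hz, hadj⟩
  -- S is a clique
  have hwalk : ∀ (c u v : V), ReachIn G A' c u → ReachIn G A' c v →
      ∃ wc : G.Walk u v, ∀ z ∈ wc.support, ReachIn G A' c z := by
    intro c u v hu hv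
    obtain ⟨w1, hw1⟩ := hu
    obtain ⟨w2, hw2⟩ := hv
    refine ⟨w1.reverse.append w2, fun z hz => ?_⟩
    rw [SimpleGraph.Walk.mem_support_append_iff] at hz
    rcases hz with hz | hz
    · rw [SimpleGraph.Walk.support_reverse, List.mem_reverse] at hz
      exact reachin_prefix w1 hw1 hz
    · exact reachin_prefix w2 hw2 hz
  have hSclq : ∀ x ∈ S, ∀ y ∈ S, x ≠ y → G.Adj x y := by
    intro x hxS y hyS hxyne
    by_contra hned
    obtain ⟨⟨za, hzaCa, hxza⟩, ⟨zb, hzbCb, hxzb⟩⟩ := hnbr x hxS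
    obtain ⟨⟨wa, hwaCa, hywa⟩, ⟨wb, hwbCb, hywb⟩⟩ := hnbr y hyS
    obtain ⟨wca, hwca⟩ := hwalk a za wa hzaCa hwaCa
    obtain ⟨wcb, hwcb⟩ := hwalk b zb wb hzbCb hwbCb
    set p₀ : G.Walk x y := SimpleGraph.Walk.cons hxza (wca.concat hywa.symm) with hp₀def
    have hp₀ : ∀ z ∈ p₀.support, z = x ∨ z = y ∨ z ∈ Ca := by
      intro z hz
      rw [hp₀def, SimpleGraph.Walk.support_cons] at hz
      rcases List.mem_cons.mp hz with rfl | hz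
      · exact Or.inl rfl
      · rw [SimpleGraph.Walk.support_concat] at hz
        rcases List.mem_append.mp hz with hz | hz
        · exact Or.inr (Or.inr (hwca z hz))
        · exact Or.inr (Or.inl (List.mem_singleton.mp hz))
    set q₀ : G.Walk x y := SimpleGraph.Walk.cons hxzb (wcb.concat hywb.symm) with hq₀def
    have hq₀ : ∀ z ∈ q₀.support, z = x ∨ z = y ∨ z ∈ Cb := by
      intro z hz
      rw [hq₀def, SimpleGraph.Walk.support_cons] at hz
      rcases List.mem_cons.mp hz with rfl | hz
      · exact Or.inl rfl
      · rw [SimpleGraph.Walk.support_concat] at hz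
        rcases List.mem_append.mp hz with hz | hz
        · exact Or.inr (Or.inr (hwcb z hz))
        · exact Or.inr (Or.inl (List.mem_singleton.mp hz))
    obtain ⟨pa, hpaint, hpaN, hpac⟩ := exists_chordless_route Ca p₀ hp₀
    obtain ⟨pb, hpbint, hpbN, hpbc⟩ := exists_chordless_route Cb q₀ hq₀
    have hxA' : x ∉ A' := fun h => ((hmemA' x).mp h).2 hxS
    have hyA' : y ∉ A' := fun h => ((hmemA' y).mp h).2 hyS
    exact no_two_routes hG hxyne hned hdisj hnoedge
      (fun h => hxA' (hCaA' x h)) (fun h => hxA' (hCbA' x h))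
      (fun h => hyA' (hCaA' y h)) (fun h => hyA' (hCbA' y h))
      pa pb hpaint hpbint hpaN hpbN hpac hpbc
  -- construct a simplicial vertex on each side
  have mkside : ∀ (c d : V), c ∈ A' → c ∈ A → d ∈ A → d ∉ S →
      ¬ ReachIn G A' c d →
      ∃ u, ReachIn G A' c u ∧ u ∈ A ∧ SimpIn G A u := by
    intro c d hcA' hcA hdA hdS hdnr
    set Cc : Set V := {z | ReachIn G A' c z} with hCc
    have hCcA' : ∀ z ∈ Cc, z ∈ A' := fun z hz => reachin_mem hz
    have hclosed : ∀ u ∈ Cc, ∀ v, v ∈ A' → G.Adj u v → v ∈ Cc :=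
      fun u hu v hv hadj => reachin_trans hu (reachin_adj (hCcA' u hu) hv hadj)
    set Ac : Finset V := A.filter (fun v => v ∈ Cc) ∪ S with hAc
    have hAcsub : Ac ⊆ A := by
      intro z hz
      rcases Finset.mem_union.mp hz with hz | hz
      · exact (Finset.mem_filter.mp hz).1
      · exact hSsub hz
    have hdAc : d ∉ Ac := by
      intro hd
      rcases Finset.mem_union.mp hd with hd | hd
      · exact hdnr (Finset.mem_filter.mp hd).2
      · exact hdS hd
    have hAcssub : Ac ⊂ A := ⟨hAcsub, fun h => hdAc (h hdA)⟩
    have hcAc : c ∈ Ac :=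
      Finset.mem_union_left _ (Finset.mem_filter.mpr ⟨hcA, reachin_refl hcA'⟩)
    have hnb : ∀ u, ReachIn G A' c u → ∀ z ∈ A, G.Adj u z → z ∈ Ac := by
      intro u hu z hz hadj
      by_cases hzS : z ∈ S
      · exact Finset.mem_union_right _ hzS
      · exact Finset.mem_union_left _ (Finset.mem_filter.mpr ⟨hz,
          hclosed u hu z ((hmemA' z).mpr ⟨hz, hzS⟩) hadj⟩)
    have hlift : ∀ u, u ∈ Cc → SimpIn G Ac u → SimpIn G A u := by
      intro u huCc hsimp xx hxx yy hyy hux huy hxy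
      exact hsimp xx (hnb u huCc xx hxx hux) yy (hnb u huCc yy hyy huy) hux huy hxy
    rcases ih Ac hAcssub ⟨c, hcAc⟩ with hclqc | ⟨u1, hu1, u2, hu2, hne12, hnadj12, hs1, hs2⟩
    · exact ⟨c, reachin_refl hcA', hcA, hlift c (reachin_refl hcA')
        (fun xx hxx yy hyy _ _ hxy => hclqc xx hxx yy hyy hxy)⟩
    · have hnot : u1 ∉ S ∨ u2 ∉ S := by
        by_contra h
        push_neg at h
        exact hnadj12 (hSclq u1 h.1 u2 h.2 hne12)
      rcases hnot with h | h
      · have hu1' : u1 ∈ Cc := by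
          rcases Finset.mem_union.mp hu1 with h1 | h1
          · exact (Finset.mem_filter.mp h1).2
          · exact absurd h1 h
        exact ⟨u1, hu1', hAcsub hu1, hlift u1 hu1' hs1⟩
      · have hu2' : u2 ∈ Cc := by
          rcases Finset.mem_union.mp hu2 with h1 | h1
          · exact (Finset.mem_filter.mp h1).2
          · exact absurd h1 h
        exact ⟨u2, hu2', hAcsub hu2, hlift u2 hu2' hs2⟩
  obtain ⟨ua, huaCa, huaA, hsa⟩ := mkside a b haA' haA hbA hbS hSnoreach
  obtain ⟨ub, hubCb, hubA, hsb⟩ := mkside b a hbA' hbA haA haS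
    (fun h => hSnoreach (reachin_symm h))
  refine ⟨ua, huaA, ub, hubA, ?_, ?_, hsa, hsb⟩
  · intro h
    exact hdisj ua huaCa (by rw [h]; exact hubCb)
  · exact hnoedge ua huaCa ub hubCb

theorem exists_simplicial [Fintype V] [DecidableEq V] (hG : IsChordal G)
    (A : Finset V) (hA : A.Nonempty) : ∃ u ∈ A, SimpIn G A u := by
  rcases dirac hG A hA with h | ⟨u, hu, v, hv, hne, hnadj, hsu, hsv⟩
  · obtain ⟨a, ha⟩ := hA
    exact ⟨a, ha, fun x hx y hy _ _ hxy => h x hx y hy hxy⟩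
  · exact ⟨u, hu, hsu⟩

open Finset in
/-- Colouring a chordal piece with small cliques from lists. -/
theorem chordal_colour [Fintype V] [DecidableEq V] (hG : IsChordal G) (t : ℕ)
    (A : Finset V) (L : V → Finset ℕ)
    (hclique : ∀ B ⊆ A, (∀ x ∈ B, ∀ y ∈ B, x ≠ y → G.Adj x y) → B.card ≤ t)
    (hL : ∀ v ∈ A, t ≤ (L v).card) :
    ∃ c : V → ℕ, (∀ v ∈ A, c v ∈ L v) ∧
      ∀ u ∈ A, ∀ v ∈ A, G.Adj u v → c u ≠ c v := by
  classical
  induction A using Finset.strongInduction with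
  | _ A ih =>
  rcases A.eq_empty_or_nonempty with rfl | hA
  · exact ⟨fun _ => 0, by simp, by simp⟩
  obtain ⟨v, hvA, hsimp⟩ := exists_simplicial hG A hA
  set A' := A.erase v with hA'
  have hA'sub : A' ⊆ A := Finset.erase_subset v A
  obtain ⟨c, hcmem, hcproper⟩ := ih A' (Finset.erase_ssubset hvA)
    (fun B hB => hclique B (hB.trans hA'sub)) (fun u hu => hL u (hA'sub hu))
  set N := A'.filter (G.Adj v) with hN
  have hvN : v ∉ N := fun h => Finset.notMem_erase v A (Finset.mem_filter.mp h).1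
  have hNclique : insert v N ⊆ A ∧
      (∀ x ∈ insert v N, ∀ y ∈ insert v N, x ≠ y → G.Adj x y) := by
    constructor
    · intro x hx
      rcases Finset.mem_insert.mp hx with rfl | hx
      · exact hvA
      · exact hA'sub (Finset.mem_filter.mp hx).1
    · intro x hx y hy hxy
      rcases Finset.mem_insert.mp hx with rfl | hx <;>
        rcases Finset.mem_insert.mp hy with rfl | hy
      · exact absurd rfl hxy
      · exact (Finset.mem_filter.mp hy).2
      · exact ((Finset.mem_filter.mp hx).2).symm
      · exact hsimp x (hA'sub (Finset.mem_filter.mp hx).1)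
          y (hA'sub (Finset.mem_filter.mp hy).1)
          (Finset.mem_filter.mp hx).2 (Finset.mem_filter.mp hy).2 hxy
  have hNcard : N.card < t := by
    have := hclique (insert v N) hNclique.1 hNclique.2
    rw [Finset.card_insert_of_notMem hvN] at this
    omega
  have himg : (N.image c).card < (L v).card :=
    lt_of_le_of_lt (Finset.card_image_le) (lt_of_lt_of_le hNcard (hL v hvA))
  have hfree : ∃ a ∈ L v, a ∉ N.image c := by
    by_contra h
    push_neg at h
    exact absurd (Finset.card_le_card h) (not_le.mpr himg)
  obtain ⟨a, haL, haN⟩ := hfree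
  refine ⟨Function.update c v a, ?_, ?_⟩
  · intro u hu
    rcases eq_or_ne u v with rfl | hne
    · rwa [Function.update_self]
    · rw [Function.update_of_ne hne]
      exact hcmem u (Finset.mem_erase.mpr ⟨hne, hu⟩)
  · intro u hu w hw hadj
    have key : ∀ z ∈ A, G.Adj v z → a ≠ c z := by
      intro z hz hvz h
      exact haN (Finset.mem_image.mpr ⟨z,
        Finset.mem_filter.mpr ⟨Finset.mem_erase.mpr ⟨fun h' => G.irrefl (h' ▸ hvz), hz⟩, hvz⟩,
        h.symm⟩)
    by_cases huv : u = v
    · by_cases hwv : w = v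
      · rw [huv, hwv] at hadj; exact absurd hadj (G.irrefl)
      · rw [huv, Function.update_self, Function.update_of_ne hwv]
        exact key w hw (huv ▸ hadj)
    · by_cases hwv : w = v
      · rw [hwv, Function.update_self, Function.update_of_ne huv]
        exact fun h => key u hu (hwv ▸ hadj).symm h.symm
      · rw [Function.update_of_ne huv, Function.update_of_ne hwv]
        exact hcproper u (Finset.mem_erase.mpr ⟨huv, hu⟩)
          w (Finset.mem_erase.mpr ⟨hwv, hw⟩) hadj

end Chordal

open Finset in
/-- The partial list colouring conjecture for chordal graphs. -/
theorem partial_list_colouring_chordal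
    {V : Type*} [Fintype V] (G : SimpleGraph V) (s t : ℕ)
    (hchordal : IsChordal G)
    (hs : listChromaticNumber G = s) (ht : 0 < t) (hts : t < s)
    (L : V → Finset ℕ) (hL : ∀ v, (L v).card = t) :
    ∃ S : Finset V,
      (t * Fintype.card V : ℚ) / s ≤ S.card ∧
      ∃ c : V → ℕ, (∀ v ∈ S, c v ∈ L v) ∧
        ∀ u ∈ S, ∀ v ∈ S, G.Adj u v → c u ≠ c v := by
  classical
  -- G is s-choosable
  have hchoos : Choosable G s := by
    have hne : {k | Choosable G k}.Nonempty := by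
      by_contra h
      rw [Set.not_nonempty_iff_eq_empty] at h
      rw [listChromaticNumber, h, Nat.sInf_empty] at hs
      omega
    have h1 := Nat.sInf_mem hne
    have h2 : sInf {k | Choosable G k} = s := hs
    rwa [h2] at h1
  -- a proper s-colouring
  obtain ⟨c₀, hc₀mem, hc₀proper⟩ := hchoos (fun _ => range s) (fun _ => card_range s)
  -- colour classes
  set f : ℕ → ℕ := fun i => (Finset.univ.filter (fun v => c₀ v = i)).card with hf
  obtain ⟨T, hTsub, hTcard, hTbig⟩ := exists_big_classes s t (le_of_lt hts) f
  set S : Finset V := Finset.univ.filter (fun v => c₀ v ∈ T) with hS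
  -- cardinality of S
  have hcardS : ∑ i ∈ T, f i = S.card := by
    rw [Finset.card_eq_sum_card_fiberwise (f := c₀) (s := S) (t := T)
      (fun v hv => (Finset.mem_filter.mp hv).2)]
    refine Finset.sum_congr rfl fun i hi => ?_
    show f i = _
    rw [hf]
    rw [Finset.filter_filter]
    have hiff : ∀ v : V, (c₀ v ∈ T ∧ c₀ v = i) ↔ c₀ v = i :=
      fun v => ⟨fun h => h.2, fun h => ⟨h ▸ hi, h⟩⟩
    simp only [hiff]
  have hcardV : ∑ i ∈ range s, f i = Fintype.card V := by
    rw [← Finset.card_univ,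
      Finset.card_eq_sum_card_fiberwise (f := c₀) (t := range s)
      (fun v _ => hc₀mem v)]
  have hkey : t * Fintype.card V ≤ s * S.card := by
    rw [← hcardS, ← hcardV]; exact hTbig
  have hs0 : 0 < s := lt_trans ht hts
  refine ⟨S, ?_, ?_⟩
  · rw [div_le_iff₀ (by exact_mod_cast hs0)]
    calc (t * Fintype.card V : ℚ) = ((t * Fintype.card V : ℕ) : ℚ) := by push_cast; ring
    _ ≤ ((s * S.card : ℕ) : ℚ) := by exact_mod_cast hkey
    _ = S.card * s := by push_cast; ring
  · refine chordal_colour hchordal t S L ?_ (fun v _ => le_of_eq (hL v).symm)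
    intro B hBS hBclique
    have hinj : Set.InjOn c₀ B := by
      intro x hx y hy hxy
      by_contra hne
      exact hc₀proper x y (hBclique x hx y hy hne) hxy
    calc B.card = (B.image c₀).card := (Finset.card_image_of_injOn hinj).symm
    _ ≤ T.card := by
        apply Finset.card_le_card
        intro i hi
        obtain ⟨v, hv, rfl⟩ := Finset.mem_image.mp hi
        have := hBS hv
        rw [hS, Finset.mem_filter] at this
        exact this.2
    _ = t := hTcard
end

section
/- Every chordless graph is 2-degenerate: if G is a graph in which no cycle has a chord, then every nonempty subgraph of G has a vertex of degree at most 2. -/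
open SimpleGraph

section Helpers

variable {V : Type*} {G : SimpleGraph V} [DecidableEq V]

private lemma takeUntil_start' {v w : V} (p : G.Walk v w) (h : v ∈ p.support) :
    p.takeUntil v h = Walk.nil := by
  cases p with
  | nil => rfl
  | cons r q => simp [Walk.takeUntil]

private lemma takeUntil_cons_ne' {v w x u : V} (r : G.Adj v w) (q : G.Walk w x)
    (h : u ∈ (Walk.cons r q).support) (hne : u ≠ v) (h' : u ∈ q.support) :
    (Walk.cons r q).takeUntil u h = Walk.cons r (q.takeUntil u h') := by
  simp [Walk.takeUntil, hne.symm]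

omit [DecidableEq V] in
private lemma mem_sup_cons' {v w x u : V} {r : G.Adj v w} {q : G.Walk w x}
    (h : u ∈ (Walk.cons r q).support) (hne : u ≠ v) : u ∈ q.support := by
  rcases (by simpa [Walk.support_cons] using h : u = v ∨ u ∈ q.support) with h1 | h1
  · exact absurd h1 hne
  · exact h1

private lemma takeUntil_total' {v w : V} (p : G.Walk v w) (x y : V) (hx : x ∈ p.support)
    (hy : y ∈ p.support) :
    y ∈ (p.takeUntil x hx).support ∨ x ∈ (p.takeUntil y hy).support := by
  induction p with
  | nil =>
    left
    simp only [Walk.mem_support_nil_iff] at hx hy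
    subst hx; subst hy
    exact Walk.start_mem_support _
  | @cons a b c r q ih =>
    by_cases hyv : y = a
    · subst hyv; left; exact Walk.start_mem_support _
    by_cases hxv : x = a
    · subst hxv; right; exact Walk.start_mem_support _
    · have hx' : x ∈ q.support := mem_sup_cons' hx hxv
      have hy' : y ∈ q.support := mem_sup_cons' hy hyv
      rw [takeUntil_cons_ne' r q hx hxv hx', takeUntil_cons_ne' r q hy hyv hy']
      simp only [Walk.support_cons, List.mem_cons]
      rcases ih hx' hy' with h1 | h1
      · left; right; exact h1
      · right; right; exact h1

private lemma length_takeUntil_le_of_mem' {v w : V} (p : G.Walk v w) (x y : V)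
    (hx : x ∈ p.support) (hy : y ∈ p.support) (hy' : y ∈ (p.takeUntil x hx).support) :
    (p.takeUntil y hy).length ≤ (p.takeUntil x hx).length := by
  induction p with
  | nil =>
    simp only [Walk.mem_support_nil_iff] at hx hy
    subst hx; subst hy
    exact le_refl _
  | @cons a b c r q ih =>
    by_cases hyv : y = a
    · subst hyv; rw [takeUntil_start']; simp
    by_cases hxv : x = a
    · subst hxv
      rw [takeUntil_start'] at hy'
      simp only [Walk.support_nil, List.mem_singleton] at hy'
      exact absurd hy' hyv
    · have hx' : x ∈ q.support := mem_sup_cons' hx hxv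
      rw [takeUntil_cons_ne' r q hx hxv hx'] at hy'
      have hy'' : y ∈ (q.takeUntil x hx').support := mem_sup_cons' hy' hyv
      have hyq : y ∈ q.support := q.support_takeUntil_subset hx' hy''
      rw [takeUntil_cons_ne' r q hx hxv hx', takeUntil_cons_ne' r q hy hyv hyq]
      simpa using ih hx' hyq hy''

private lemma eq_of_length_takeUntil_eq' {v w : V} (p : G.Walk v w) (x y : V)
    (hx : x ∈ p.support) (hy : y ∈ p.support) (hy' : y ∈ (p.takeUntil x hx).support)
    (hlen : (p.takeUntil y hy).length = (p.takeUntil x hx).length) : y = x := by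
  induction p with
  | nil =>
    simp only [Walk.mem_support_nil_iff] at hx hy
    subst hx; subst hy; rfl
  | @cons a b c r q ih =>
    by_cases hyv : y = a
    · subst hyv
      have h0 : ((Walk.cons r q).takeUntil x hx).length = 0 := by
        rw [takeUntil_start'] at hlen; simpa using hlen.symm
      exact Walk.eq_of_length_eq_zero h0
    by_cases hxv : x = a
    · subst hxv
      rw [takeUntil_start'] at hy'
      simp only [Walk.support_nil, List.mem_singleton] at hy'
      exact absurd hy' hyv
    · have hx' : x ∈ q.support := mem_sup_cons' hx hxv
      rw [takeUntil_cons_ne' r q hx hxv hx'] at hy'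
      have hy'' : y ∈ (q.takeUntil x hx').support := mem_sup_cons' hy' hyv
      have hyq : y ∈ q.support := q.support_takeUntil_subset hx' hy''
      rw [takeUntil_cons_ne' r q hx hxv hx', takeUntil_cons_ne' r q hy hyv hyq] at hlen
      exact ih hx' hyq hy'' (by simpa using hlen)

private lemma takeUntil_length_eq_one_of_edge' {a b w : V} (p : G.Walk a b) (hp : p.IsPath)
    (he : s(a, w) ∈ p.edges) (hw : w ∈ p.support) : (p.takeUntil w hw).length = 1 := by
  cases p with
  | nil => simp at he
  | @cons _ x _ r q =>
    rw [Walk.edges_cons, List.mem_cons] at he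
    rcases he with he | he
    · have hwx : w = x := Sym2.congr_right.mp he
      subst hwx
      have hne : w ≠ a := r.ne'
      rw [takeUntil_cons_ne' r q hw hne (Walk.start_mem_support q), takeUntil_start']
      rfl
    · exfalso
      have : a ∈ q.support := Walk.fst_mem_support_of_mem_edges q he
      exact ((Walk.cons_isPath_iff r q).mp hp).2 this

end Helpers

/-- `G` is chordless: no cycle of `G` has a chord, i.e. any edge joining two
vertices of a cycle is an edge of that cycle. -/
def Chordless {V : Type*} (G : SimpleGraph V) : Prop :=
  ∀ (u : V) (w : G.Walk u u), w.IsCycle →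
    ∀ a ∈ w.support, ∀ b ∈ w.support, G.Adj a b → w.toSubgraph.Adj a b

/-- Every chordless graph is 2-degenerate: every nonempty (induced) subgraph has a
vertex of degree at most 2. -/
theorem chordless_two_degenerate {V : Type*} [Fintype V] [DecidableEq V]
    (G : SimpleGraph V) [DecidableRel G.Adj] (hG : Chordless G) :
    ∀ S : Finset V, S.Nonempty →
      ∃ v ∈ S, (S.filter (fun u => G.Adj v u)).card ≤ 2 := by
  by_contra hcon
  push_neg at hcon
  obtain ⟨S, hS, hdeg⟩ := hcon
  classical
  set P : Set ℕ :=
    {n | ∃ (x : V) (y : V) (p : G.Walk x y), p.IsPath ∧ (∀ z ∈ p.support, z ∈ S) ∧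
      p.length = n} with hPdef
  obtain ⟨v₀, hv₀⟩ := hS
  have hPne : P.Nonempty :=
    ⟨0, v₀, v₀, Walk.nil, Walk.IsPath.nil, by simpa using hv₀, rfl⟩
  have hPbdd : BddAbove P := by
    refine ⟨Fintype.card V, ?_⟩
    rintro n ⟨x, y, p, hp, _, rfl⟩
    exact hp.length_lt.le
  obtain ⟨a, b, p, hp, hsub, hlen⟩ := Nat.sSup_mem hPne hPbdd
  have ha : a ∈ S := hsub a p.start_mem_support
  have hN : 2 < (S.filter (fun u => G.Adj a u)).card := hdeg a ha
  set N := S.filter (fun u => G.Adj a u) with hNdef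
  have hNadj : ∀ u ∈ N, G.Adj a u := fun u hu => (Finset.mem_filter.mp hu).2
  have hNS : ∀ u ∈ N, u ∈ S := fun u hu => (Finset.mem_filter.mp hu).1
  -- every neighbor of `a` in `S` lies on the maximal path
  have hmem : ∀ u ∈ N, u ∈ p.support := by
    intro u hu
    by_contra hns
    have hadj := hNadj u hu
    have hq : (Walk.cons hadj.symm p).IsPath := hp.cons hns
    have hmemP : p.length + 1 ∈ P := by
      refine ⟨u, b, Walk.cons hadj.symm p, hq, ?_, by simp⟩
      intro z hz
      rcases (by simpa [Walk.support_cons] using hz : z = u ∨ z ∈ p.support) with h | h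
      · rw [h]; exact hNS u hu
      · exact hsub z h
    have hle := le_csSup hPbdd hmemP
    rw [hlen] at hle
    omega
  -- injectivity of takeUntil length
  have key : ∀ x y (hxs : x ∈ p.support) (hys : y ∈ p.support),
      (p.takeUntil x hxs).length = (p.takeUntil y hys).length → x = y := by
    intro x y hxs hys hxy
    rcases takeUntil_total' p x y hxs hys with h | h
    · exact (eq_of_length_takeUntil_eq' p x y hxs hys h hxy.symm).symm
    · exact eq_of_length_takeUntil_eq' p y x hys hxs h hxy
  -- f values positive
  have hpos : ∀ u ∈ N, ∀ h : u ∈ p.support, 1 ≤ (p.takeUntil u h).length := by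
    intro u hu h
    rcases Nat.eq_zero_or_pos (p.takeUntil u h).length with h0 | h1
    · exact absurd (Walk.eq_of_length_eq_zero h0) (hNadj u hu).ne
    · exact h1
  -- pick the farthest neighbor u
  have hNne : N.Nonempty := Finset.card_pos.mp (by omega)
  obtain ⟨u, huN, hmax⟩ := N.exists_max_image
    (fun x => if h : x ∈ p.support then (p.takeUntil x h).length else 0) hNne
  have hus : u ∈ p.support := hmem u huN
  have hmax' : ∀ w ∈ N, ∀ hws : w ∈ p.support,
      (p.takeUntil w hws).length ≤ (p.takeUntil u hus).length := by
    intro w hw hws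
    have := hmax w hw
    rwa [dif_pos hws, dif_pos hus] at this
  -- pick a second neighbor w with takeUntil length ≥ 2
  have h2 : 1 < (N.erase u).card := by
    have := Finset.card_erase_of_mem huN
    omega
  obtain ⟨w1, w2, hw1, hw2, hww⟩ := Finset.one_lt_card_iff.mp h2
  have hw1N : w1 ∈ N := Finset.mem_of_mem_erase hw1
  have hw2N : w2 ∈ N := Finset.mem_of_mem_erase hw2
  have hw1u : w1 ≠ u := Finset.ne_of_mem_erase hw1
  have hw2u : w2 ≠ u := Finset.ne_of_mem_erase hw2
  have hw1s : w1 ∈ p.support := hmem w1 hw1N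
  have hw2s : w2 ∈ p.support := hmem w2 hw2N
  have hne12 : (p.takeUntil w1 hw1s).length ≠ (p.takeUntil w2 hw2s).length := by
    intro h
    exact hww (key w1 w2 hw1s hw2s h)
  obtain ⟨w, hwN, hwu, hws, hw2le⟩ :
      ∃ w, w ∈ N ∧ w ≠ u ∧ ∃ hws : w ∈ p.support, 2 ≤ (p.takeUntil w hws).length := by
    by_cases hc : 2 ≤ (p.takeUntil w1 hw1s).length
    · exact ⟨w1, hw1N, hw1u, hw1s, hc⟩
    · have h1 := hpos w1 hw1N hw1s
      have h2' := hpos w2 hw2N hw2s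
      refine ⟨w2, hw2N, hw2u, hw2s, ?_⟩
      omega
  -- build the cycle
  have hadj : G.Adj a u := hNadj u huN
  set q := p.takeUntil u hus with hqdef
  have hq_path : q.IsPath := hp.takeUntil hus
  have hq_len : 2 ≤ q.length := le_trans hw2le (hmax' w hwN hws)
  have hnotedge : s(a, u) ∉ q.edges := by
    intro he
    have hep : s(a, u) ∈ p.edges := p.edges_takeUntil_subset hus he
    have h1 := takeUntil_length_eq_one_of_edge' p hp hep hus
    rw [← hqdef] at h1
    omega
  set c : G.Walk a a := Walk.cons hadj q.reverse with hcdef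
  have hcyc : c.IsCycle := by
    rw [hcdef, Walk.cons_isCycle_iff]
    exact ⟨hq_path.reverse, by simpa [Walk.edges_reverse, List.mem_reverse] using hnotedge⟩
  -- w is on the cycle
  have hwq : w ∈ q.support := by
    rcases takeUntil_total' p u w hus hws with h | h
    · exact h
    · have hle1 := length_takeUntil_le_of_mem' p w u hws hus h
      have hle2 := hmax' w hwN hws
      have heq : (p.takeUntil w hws).length = (p.takeUntil u hus).length := le_antisymm hle2 hle1
      exact absurd (key w u hws hus heq) hwu
  have hwc : w ∈ c.support := by
    rw [hcdef]
    simp only [Walk.support_cons, Walk.support_reverse, List.mem_cons, List.mem_reverse]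
    right; exact hwq
  have hac : a ∈ c.support := c.start_mem_support
  -- the chord
  have hchord := hG a c hcyc a hac w hwc (hNadj w hwN)
  have hedge : s(a, w) ∈ c.edges := by
    rw [← Walk.mem_edges_toSubgraph]
    exact SimpleGraph.Subgraph.mem_edgeSet.mpr hchord
  rw [hcdef, Walk.edges_cons, List.mem_cons] at hedge
  rcases hedge with he | he
  · exact hwu (Sym2.congr_right.mp he)
  · rw [Walk.edges_reverse, List.mem_reverse] at he
    have hep : s(a, w) ∈ p.edges := p.edges_takeUntil_subset hus he
    have h1 := takeUntil_length_eq_one_of_edge' p hp hep hws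
    omega
end

section
/- Let G be a minimally 2-connected graph (i.e., 2-connected and chordless). Then for every vertex x of G there exist vertices u, v, w of G such that v and w are both neighbours of u, both v and w have degree exactly 2 in G, and x is neither v nor w. -/
/-- `G` is 2-connected: it has at least 3 vertices and remains connected after
deleting any single vertex. -/
def TwoConnected {V : Type*} [Fintype V] (G : SimpleGraph V) : Prop :=
  3 ≤ Fintype.card V ∧ ∀ v : V, (G.induce {u : V | u ≠ v}).Connected

namespace MinTwoConn

open SimpleGraph

variable {V : Type*} {G : SimpleGraph V}



/-- Appending two paths that intersect only in the common endpoint gives a path. -/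
lemma isPath_append_of {u v w : V} {p : G.Walk u v} {q : G.Walk v w}
    (hp : p.IsPath) (hq : q.IsPath)
    (hint : ∀ t, t ∈ p.support → t ∈ q.support → t = v) : (p.append q).IsPath := by
  rw [Walk.isPath_def, Walk.support_append]
  refine List.Nodup.append hp.support_nodup (hq.support_nodup.tail) ?_
  intro t htp htq
  have htq' : t ∈ q.support := List.tail_subset _ htq
  have ht : t = v := hint t htp htq'
  have hnd := hq.support_nodup
  rw [q.support_eq_cons] at hnd
  rw [ht] at htq
  exact (List.nodup_cons.mp hnd).1 htq

/-- Two internally disjoint, edge-disjoint paths between distinct vertices form a cycle. -/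
lemma isCycle_append_of {u v : V} {p : G.Walk u v} {q : G.Walk v u}
    (hne : u ≠ v) (hp : p.IsPath) (hq : q.IsPath)
    (hint : ∀ t, t ∈ p.support → t ∈ q.support → t = u ∨ t = v)
    (hedge : ∀ e ∈ p.edges, e ∉ q.edges) : (p.append q).IsCycle := by
  have hu_np : u ∉ p.support.tail := by
    have := hp.support_nodup
    rw [p.support_eq_cons] at this
    exact (List.nodup_cons.mp this).1
  have hv_nq : v ∉ q.support.tail := by
    have := hq.support_nodup
    rw [q.support_eq_cons] at this
    exact (List.nodup_cons.mp this).1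
  constructor
  · constructor
    · constructor
      rw [Walk.edges_append]
      exact List.Nodup.append hp.isTrail.edges_nodup hq.isTrail.edges_nodup hedge
    · intro h
      have hv : v ∈ (p.append q).support := by
        rw [Walk.mem_support_append_iff]
        left; exact p.end_mem_support
      rw [h] at hv
      simp at hv
      exact hne hv.symm
  · rw [Walk.support_append, p.support_eq_cons, List.cons_append, List.tail_cons]
    refine List.Nodup.append (hp.support_nodup.tail) (hq.support_nodup.tail) ?_
    intro t htp htq
    have h1 : t ∈ p.support := List.tail_subset _ htp
    have h2 : t ∈ q.support := List.tail_subset _ htq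
    rcases hint t h1 h2 with rfl | rfl
    · rw [p.support_eq_cons] at htp
      exact hu_np (by simpa using htp)
    · exact hv_nq htq

/-- A walk along consecutive values of `f` from index `i`, of length `d`. -/
def walkSeg (G : SimpleGraph V) (f : ℕ → V) (i : ℕ) :
    (d : ℕ) → (∀ k, i ≤ k → k < i + d → G.Adj (f k) (f (k + 1))) → G.Walk (f i) (f (i + d))
  | 0, _ => Walk.nil
  | d + 1, h => (walkSeg G f i d fun k hk hk' => h k hk (by omega)).concat
      (h (i + d) (by omega) (by omega))

@[simp] lemma walkSeg_support (f : ℕ → V) (i d : ℕ) (h) :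
    (walkSeg G f i d h).support = (List.range' i (d + 1)).map f := by
  induction d with
  | zero => simp [walkSeg]
  | succ d ih =>
    rw [walkSeg, Walk.support_concat, ih]
    conv_rhs => rw [List.range'_concat]
    simp [Nat.add_assoc]

@[simp] lemma walkSeg_length (f : ℕ → V) (i d : ℕ) (h) :
    (walkSeg G f i d h).length = d := by
  induction d with
  | zero => simp [walkSeg]
  | succ d ih => rw [walkSeg, Walk.length_concat, ih]

@[simp] lemma walkSeg_edges (f : ℕ → V) (i d : ℕ) (h) :
    (walkSeg G f i d h).edges = (List.range' i d).map (fun k => s(f k, f (k + 1))) := by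
  induction d with
  | zero => simp [walkSeg]
  | succ d ih =>
    rw [walkSeg, Walk.edges_concat, ih]
    conv_rhs => rw [List.range'_concat]
    simp [Nat.add_assoc]

lemma walkSeg_isPath (f : ℕ → V) (i d : ℕ) (h)
    (hinj : ∀ k l, i ≤ k → k ≤ i + d → i ≤ l → l ≤ i + d → f k = f l → k = l) :
    (walkSeg G f i d h).IsPath := by
  rw [Walk.isPath_def, walkSeg_support]
  refine List.Nodup.map_on ?_ (List.nodup_range' (s := i) (n := d + 1))
  intro k hk l hl hfkl
  rw [List.mem_range'_1] at hk hl
  exact hinj k l (by omega) (by omega) (by omega) (by omega) hfkl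


lemma support_eq_map_range {u v : V} (p : G.Walk u v) :
    p.support = (List.range (p.length + 1)).map p.getVert := by
  induction p with
  | nil => simp [List.range_succ]
  | @cons a b w h q ih =>
    rw [Walk.support_cons, ih, Walk.length_cons]
    conv_rhs => rw [List.range_succ_eq_map]
    simp only [List.map_cons, List.map_map, Walk.getVert_zero]
    congr 1

lemma cycle_getVert_inj {c : V} {Z : G.Walk c c} (hZ : Z.IsCycle)
    {k l : ℕ} (hk : k < Z.length) (hl : l < Z.length) (h : Z.getVert k = Z.getVert l) : k = l := by
  have hn3 := hZ.three_le_length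
  have htail : Z.support.tail = (List.range' 1 Z.length).map Z.getVert := by
    have h1 : Z.support = (List.range (Z.length + 1)).map Z.getVert := support_eq_map_range Z
    have h2 : List.range (Z.length + 1) = 0 :: List.range' 1 Z.length := by
      rw [List.range_eq_range', List.range'_succ]
    rw [h1, h2, List.map_cons, List.tail_cons]
  have hnd : Z.support.tail.Nodup := ((Walk.isCycle_def Z).mp hZ).2.2
  rw [htail] at hnd
  have hinj := List.inj_on_of_nodup_map hnd
  have hmem : ∀ m, 0 < m → m ≤ Z.length → m ∈ List.range' 1 Z.length := by
    intro m h1 h2; rw [List.mem_range'_1]; omega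
  rcases Nat.eq_zero_or_pos k with rfl | hk0
  · rcases Nat.eq_zero_or_pos l with rfl | hl0
    · rfl
    · exfalso
      have hc : Z.getVert l = c := by rw [← h, Walk.getVert_zero]
      have hll : Z.getVert l = Z.getVert Z.length := by rw [hc, Walk.getVert_length]
      exact absurd (hinj (hmem l hl0 (by omega)) (hmem Z.length (by omega) le_rfl) hll)
        (by omega)
  · rcases Nat.eq_zero_or_pos l with rfl | hl0
    · exfalso
      have hc : Z.getVert k = c := by rw [h, Walk.getVert_zero]
      have hll : Z.getVert k = Z.getVert Z.length := by rw [hc, Walk.getVert_length]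
      exact absurd (hinj (hmem k hk0 (by omega)) (hmem Z.length (by omega) le_rfl) hll)
        (by omega)
    · exact hinj (hmem k hk0 (by omega)) (hmem l hl0 (by omega)) h

lemma cycle_mem_support {c t : V} {Z : G.Walk c c} (hZ : Z.IsCycle) :
    t ∈ Z.support ↔ ∃ k, k < Z.length ∧ Z.getVert k = t := by
  constructor
  · intro h
    obtain ⟨k, hk, hkle⟩ := Walk.mem_support_iff_exists_getVert.mp h
    rcases eq_or_lt_of_le hkle with heq | hlt
    · refine ⟨0, by have := hZ.three_le_length; omega, ?_⟩
      rw [Walk.getVert_zero, ← Walk.getVert_length Z, ← heq, hk]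
    · exact ⟨k, hlt, hk⟩
  · rintro ⟨k, hk, rfl⟩
    exact Walk.mem_support_iff_exists_getVert.mpr ⟨k, rfl, le_of_lt hk⟩

lemma getVert_mem_support' {u v : V} (p : G.Walk u v) {k : ℕ} (hk : k ≤ p.length) :
    p.getVert k ∈ p.support :=
  Walk.mem_support_iff_exists_getVert.mpr ⟨k, rfl, hk⟩


/-! ### Reachability off a cycle -/

variable {c : V}

/-- Reachability avoiding the support of `Z`. -/
def Rch (Z : G.Walk c c) (u v : V) : Prop :=
  ∃ w : G.Walk u v, ∀ t ∈ w.support, t ∉ Z.support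

lemma Rch.not_mem_left {Z : G.Walk c c} {u v : V} (h : Rch Z u v) : u ∉ Z.support := by
  obtain ⟨w, hw⟩ := h; exact hw u w.start_mem_support

lemma Rch.not_mem_right {Z : G.Walk c c} {u v : V} (h : Rch Z u v) : v ∉ Z.support := by
  obtain ⟨w, hw⟩ := h; exact hw v w.end_mem_support

lemma rch_refl {Z : G.Walk c c} {u : V} (hu : u ∉ Z.support) : Rch Z u u :=
  ⟨Walk.nil, by intro t ht; rw [Walk.support_nil] at ht; simp at ht; rwa [ht]⟩

lemma rch_symm {Z : G.Walk c c} {u v : V} (h : Rch Z u v) : Rch Z v u := by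
  obtain ⟨w, hw⟩ := h
  exact ⟨w.reverse, fun t ht => hw t (by rwa [Walk.support_reverse, List.mem_reverse] at ht)⟩

lemma rch_trans {Z : G.Walk c c} {u v w : V} (h1 : Rch Z u v) (h2 : Rch Z v w) : Rch Z u w := by
  obtain ⟨w1, hw1⟩ := h1
  obtain ⟨w2, hw2⟩ := h2
  refine ⟨w1.append w2, fun t ht => ?_⟩
  rw [Walk.mem_support_append_iff] at ht
  rcases ht with ht | ht
  exacts [hw1 t ht, hw2 t ht]

/-- `i` is a position on `Z` attached to the off-cycle component of `u`. -/
def Att (Z : G.Walk c c) (u : V) (i : ℕ) : Prop :=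
  i < Z.length ∧ ∃ t, Rch Z u t ∧ G.Adj t (Z.getVert i)

lemma rch_att {Z : G.Walk c c} {u u' : V} {i : ℕ} (h : Rch Z u u') (ha : Att Z u' i) :
    Att Z u i := by
  obtain ⟨hi, t, ht, hadj⟩ := ha
  exact ⟨hi, t, rch_trans h ht, hadj⟩

/-- First-hit: a walk from outside `Z` to `Z` yields an attachment. -/
lemma exists_attach_of_walk {Z : G.Walk c c} {u t₀ : V} (w : G.Walk u t₀) :
    u ∉ Z.support → t₀ ∈ Z.support →
    ∃ s', s' ∈ w.support ∧ s' ∈ Z.support ∧ ∃ m, Rch Z u m ∧ G.Adj m s' := by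
  induction w with
  | nil => intro hu ht; exact absurd ht hu
  | @cons a b t₀ h q ih =>
    intro hu ht
    by_cases hb : b ∈ Z.support
    · exact ⟨b, by simp [Walk.support_cons, q.start_mem_support], hb, a, rch_refl hu, h⟩
    · obtain ⟨s', hs1, hs2, m, hm, hadj⟩ := ih hb ht
      refine ⟨s', by simp [Walk.support_cons, hs1], hs2, m, ?_, hadj⟩
      obtain ⟨w', hw'⟩ := hm
      refine ⟨Walk.cons h w', fun t htt => ?_⟩
      rw [Walk.support_cons, List.mem_cons] at htt
      rcases htt with rfl | htt
      exacts [hu, hw' t htt]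

lemma induce_walk_exists {s : Set V} {a b : ↥s} (w : (G.induce s).Walk a b) :
    ∃ w' : G.Walk a.1 b.1, ∀ t ∈ w'.support, t ∈ s := by
  induction w with
  | @nil z => exact ⟨Walk.nil, by intro t ht; simp at ht; rw [ht]; exact z.2⟩
  | @cons p y t₀ h q ih =>
    obtain ⟨w', hw'⟩ := ih
    have hadj : G.Adj p.1 y.1 := by
      have := h
      rw [SimpleGraph.comap_adj] at this
      exact this
    refine ⟨Walk.cons hadj w', fun t htt => ?_⟩
    rw [Walk.support_cons, List.mem_cons] at htt
    rcases htt with rfl | htt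
    exacts [p.2, hw' t htt]

/-- A path between two attached positions through the off-cycle component of `u`. -/
lemma att_path {Z : G.Walk c c} {u : V} {i j : ℕ} (hi : Att Z u i) (hj : Att Z u j)
    (hne : Z.getVert i ≠ Z.getVert j) :
    ∃ π : G.Walk (Z.getVert i) (Z.getVert j), π.IsPath ∧
      (∀ t ∈ π.support, t = Z.getVert i ∨ t = Z.getVert j ∨ (t ∉ Z.support ∧ Rch Z u t)) ∧
      (∀ a b : V, s(a, b) ∈ π.edges → a ∉ Z.support ∨ b ∉ Z.support) := by
  classical
  obtain ⟨hilen, t₁, ht₁, hadj₁⟩ := hi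
  obtain ⟨hjlen, t₂, ht₂, hadj₂⟩ := hj
  obtain ⟨τ₀, hτ₀⟩ := rch_trans (rch_symm ht₁) ht₂
  have hτpath := τ₀.bypass_isPath
  have hτavoid : ∀ t ∈ τ₀.bypass.support, t ∉ Z.support :=
    fun t ht => hτ₀ t (τ₀.support_bypass_subset ht)
  have hτrch : ∀ t ∈ τ₀.bypass.support, Rch Z u t := by
    intro t ht
    exact rch_trans ht₁ ⟨τ₀.bypass.takeUntil t ht,
      fun r hr => hτavoid r ((τ₀.bypass.support_takeUntil_subset ht) hr)⟩
  set τ := τ₀.bypass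
  have hiZ : Z.getVert i ∈ Z.support := getVert_mem_support' Z (le_of_lt hilen)
  have hjZ : Z.getVert j ∈ Z.support := getVert_mem_support' Z (le_of_lt hjlen)
  have hsupcc : (Walk.cons hadj₁.symm (τ.concat hadj₂)).support
      = Z.getVert i :: (τ.support ++ [Z.getVert j]) := by
    rw [Walk.support_cons, Walk.support_concat]
  refine ⟨Walk.cons hadj₁.symm (τ.concat hadj₂), ?_, ?_, ?_⟩
  · rw [Walk.isPath_def, hsupcc]
    rw [List.nodup_cons]
    constructor
    · intro hmem
      rw [List.mem_append] at hmem
      rcases hmem with hmem | hmem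
      · exact (hτavoid _ hmem) hiZ
      · simp at hmem; exact hne hmem
    · refine List.Nodup.append hτpath.support_nodup (List.nodup_singleton _) ?_
      intro t htτ hts
      simp at hts
      rw [hts] at htτ
      exact (hτavoid _ htτ) hjZ
  · intro t ht
    rw [hsupcc, List.mem_cons, List.mem_append] at ht
    rcases ht with rfl | ht | ht
    · exact Or.inl rfl
    · exact Or.inr (Or.inr ⟨hτavoid t ht, hτrch t ht⟩)
    · simp at ht; exact Or.inr (Or.inl ht)
  · intro a b hab
    have hedges : (Walk.cons hadj₁.symm (τ.concat hadj₂)).edges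
        = s(Z.getVert i, t₁) :: (τ.edges ++ [s(t₂, Z.getVert j)]) := by
      rw [Walk.edges_cons, Walk.edges_concat, List.concat_eq_append]
    rw [hedges, List.mem_cons, List.mem_append] at hab
    have ht₁Z : t₁ ∉ Z.support := ht₁.not_mem_right
    have ht₂Z : t₂ ∉ Z.support := ht₂.not_mem_right
    rcases hab with hab | hab | hab
    · rw [Sym2.eq_iff] at hab
      rcases hab with ⟨_, rfl⟩ | ⟨rfl, _⟩
      exacts [Or.inr ht₁Z, Or.inl ht₁Z]
    · exact Or.inl (hτavoid a (τ.fst_mem_support_of_mem_edges hab))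
    · simp only [List.mem_singleton] at hab
      rw [Sym2.eq_iff] at hab
      rcases hab with ⟨rfl, _⟩ | ⟨_, rfl⟩
      exacts [Or.inl ht₂Z, Or.inr ht₂Z]

lemma third_exists [Fintype V] (hcard : 3 ≤ Fintype.card V) (a b : V) :
    ∃ w : V, w ≠ a ∧ w ≠ b := by
  classical
  by_contra h
  push_neg at h
  have hsub : (Finset.univ : Finset V) ⊆ {a, b} := by
    intro w _
    rcases eq_or_ne w a with rfl | hwa
    · simp
    · simp [h w hwa]
  have h1 := Finset.card_le_card hsub
  have h2 : ({a, b} : Finset V).card ≤ 2 :=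
    le_trans (Finset.card_insert_le _ _) (by simp)
  rw [Finset.card_univ] at h1
  omega

lemma preconn [Fintype V] (h2 : TwoConnected G) : G.Preconnected := by
  intro a b
  rcases eq_or_ne a b with rfl | hab
  · exact SimpleGraph.Reachable.refl a
  obtain ⟨w, hwa, hwb⟩ := third_exists h2.1 a b
  obtain ⟨wk⟩ := (h2.2 w).preconnected ⟨a, by simp [Set.mem_setOf_eq]; exact fun h => hwa h.symm⟩
    ⟨b, by simp [Set.mem_setOf_eq]; exact fun h => hwb h.symm⟩
  obtain ⟨w', _⟩ := induce_walk_exists wk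
  exact ⟨w'⟩

lemma two_le_degree [Fintype V] [DecidableRel G.Adj] (h2 : TwoConnected G) (v : V) :
    2 ≤ G.degree v := by
  by_contra hlt
  push_neg at hlt
  interval_cases h : G.degree v
  · -- degree 0
    obtain ⟨a, ha, _⟩ := third_exists h2.1 v v
    obtain ⟨w⟩ := preconn h2 v a
    cases w with
    | nil => exact ha rfl
    | cons hadj q =>
      have : 0 < G.degree v := (G.degree_pos_iff_exists_adj v).mpr ⟨_, hadj⟩
      omega
  · -- degree 1
    obtain ⟨y, hy⟩ := Finset.card_eq_one.mp h
    have hvy : v ≠ y := by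
      have : y ∈ G.neighborFinset v := by rw [hy]; simp
      exact (G.ne_of_adj (by rwa [SimpleGraph.mem_neighborFinset] at this)).symm ∘ Eq.symm
    obtain ⟨a, hav, hay⟩ := third_exists h2.1 v y
    obtain ⟨wk⟩ := (h2.2 y).preconnected ⟨v, hvy⟩ ⟨a, hay⟩
    obtain ⟨w', hw'⟩ := induce_walk_exists wk
    cases w' with
    | nil => exact hav rfl
    | @cons _ z _ hadj q =>
      have hz : z ∈ G.neighborFinset v := by rwa [SimpleGraph.mem_neighborFinset]
      rw [hy] at hz
      simp at hz
      have : z ∈ {t : V | t ≠ y} := hw' z (by simp [Walk.support_cons, q.start_mem_support])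
      exact this hz

lemma exists_two_att [Fintype V] (h2 : TwoConnected G) {Z : G.Walk c c} (hZ : Z.IsCycle)
    {u : V} (hu : u ∉ Z.support) :
    ∃ i j, i ≠ j ∧ Att Z u i ∧ Att Z u j := by
  have hn3 := hZ.three_le_length
  obtain ⟨w0⟩ := preconn h2 u c
  obtain ⟨s₁, _, hs₁Z, m₁, hm₁, hadj₁⟩ := exists_attach_of_walk w0 hu Z.start_mem_support
  obtain ⟨i₁, hi₁len, hi₁⟩ := (cycle_mem_support hZ).mp hs₁Z
  set j₀ := if i₁ + 1 < Z.length then i₁ + 1 else 0 with hj₀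
  have hj₀len : j₀ < Z.length := by rw [hj₀]; split <;> omega
  have hj₀ne : j₀ ≠ i₁ := by rw [hj₀]; split <;> omega
  have hv₂ne : Z.getVert j₀ ≠ Z.getVert i₁ := by
    intro h
    exact hj₀ne (cycle_getVert_inj hZ hj₀len hi₁len h)
  have hv₂mem : Z.getVert j₀ ∈ Z.support := getVert_mem_support' Z (le_of_lt hj₀len)
  have huv₁ : u ≠ Z.getVert i₁ := by
    intro h; rw [h] at hu; exact hu (getVert_mem_support' Z (le_of_lt hi₁len))
  obtain ⟨wk⟩ := (h2.2 (Z.getVert i₁)).preconnected ⟨u, huv₁⟩ ⟨Z.getVert j₀, hv₂ne⟩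
  obtain ⟨w', hw'⟩ := induce_walk_exists wk
  obtain ⟨s₂, hs₂w, hs₂Z, m₂, hm₂, hadj₂⟩ := exists_attach_of_walk w' hu hv₂mem
  obtain ⟨i₂, hi₂len, hi₂⟩ := (cycle_mem_support hZ).mp hs₂Z
  have hs₂ne : s₂ ≠ Z.getVert i₁ := hw' s₂ hs₂w
  have hne : i₂ ≠ i₁ := by
    intro h
    rw [h] at hi₂
    exact hs₂ne hi₂.symm
  refine ⟨i₂, i₁, hne, ⟨hi₂len, m₂, hm₂, by rw [hi₂]; exact hadj₂⟩,
    ⟨hi₁len, m₁, hm₁, by rw [hi₁]; exact hadj₁⟩⟩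

lemma no_adjacent_att (hch : Chordless G) {Z : G.Walk c c} (hZ : Z.IsCycle)
    {u : V} {i : ℕ} (hi1 : i + 1 < Z.length) (hAi : Att Z u i) (hAj : Att Z u (i + 1)) :
    False := by
  classical
  set n := Z.length with hn
  set f := Z.getVert with hf
  have hn3 : 3 ≤ n := hZ.three_le_length
  have hadj : ∀ k, k < n → G.Adj (f k) (f (k + 1)) := fun k hk => Z.adj_getVert_succ hk
  have hinj : ∀ k l, k < n → l < n → f k = f l → k = l :=
    fun k l hk hl h => cycle_getVert_inj hZ hk hl h
  have hfn0 : f n = f 0 := by rw [hf, Walk.getVert_length, Walk.getVert_zero]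
  have hmem : ∀ k, k ≤ n → f k ∈ Z.support := fun k hk => getVert_mem_support' Z hk
  have hne : f i ≠ f (i + 1) := fun h => by
    have := hinj i (i + 1) (by omega) (by omega) h; omega
  obtain ⟨π, hπpath, hπsup, hπedge⟩ := att_path hAi hAj hne
  -- the long way around the cycle
  have h₁ : ∀ k, i + 1 ≤ k → k < (i + 1) + (n - 1 - i) → G.Adj (f k) (f (k + 1)) :=
    fun k hk hk' => hadj k (by omega)
  have h₂ : ∀ k, 0 ≤ k → k < 0 + i → G.Adj (f k) (f (k + 1)) :=
    fun k hk hk' => hadj k (by omega)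
  have hc1 : f ((i + 1) + (n - 1 - i)) = f 0 := by
    rw [show (i + 1) + (n - 1 - i) = n by omega, hfn0]
  have hc2 : f (0 + i) = f i := by rw [Nat.zero_add]
  set Q : G.Walk (f (i + 1)) (f i) :=
    ((walkSeg G f (i + 1) (n - 1 - i) h₁).copy rfl hc1).append
      ((walkSeg G f 0 i h₂).copy rfl hc2) with hQ
  have hQsup : Q.support = (List.range' (i + 1) (n - 1 - i + 1)).map f
      ++ (List.range' 1 i).map f := by
    rw [hQ, Walk.support_append, Walk.support_copy, Walk.support_copy,
      walkSeg_support, walkSeg_support]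
    congr 1
  have hQmem : ∀ t ∈ Q.support, t ∈ Z.support := by
    intro t ht
    rw [hQsup, List.mem_append, List.mem_map, List.mem_map] at ht
    rcases ht with ⟨k, hk, rfl⟩ | ⟨k, hk, rfl⟩ <;> rw [List.mem_range'_1] at hk <;>
      exact hmem k (by omega)
  have hQedges : ∀ e ∈ Q.edges, ∃ k, k < n ∧ (i + 1 ≤ k ∨ k + 1 ≤ i) ∧
      e = s(f k, f (k + 1)) := by
    intro e he
    rw [hQ, Walk.edges_append, Walk.edges_copy, Walk.edges_copy,
      walkSeg_edges, walkSeg_edges, List.mem_append, List.mem_map, List.mem_map] at he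
    rcases he with ⟨k, hk, rfl⟩ | ⟨k, hk, rfl⟩ <;> rw [List.mem_range'_1] at hk
    · exact ⟨k, by omega, by omega, rfl⟩
    · exact ⟨k, by omega, by omega, rfl⟩
  have hQpath : Q.IsPath := by
    rw [Walk.isPath_def, hQsup]
    have hsplit : List.range' (i + 1) (n - 1 - i + 1) = List.range' (i + 1) (n - 1 - i) ++ [n] := by
      have heq : i + 1 + 1 * (n - 1 - i) = n := by omega
      rw [List.range'_concat, heq]
    rw [hsplit, List.map_append]
    have : (List.map f [n]) = List.map f [0] := by simp [hfn0]
    rw [this, List.append_assoc, ← List.map_append]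
    have hidx : (([0] : List ℕ) ++ List.range' 1 i).Nodup := by
      refine List.Nodup.append (List.nodup_singleton _) List.nodup_range' ?_
      intro t ht1 ht2
      simp at ht1
      rw [ht1, List.mem_range'_1] at ht2
      omega
    rw [← List.map_append]
    refine List.Nodup.map_on ?_ ?_
    · intro k hk l hl hkl
      rw [List.mem_append, List.mem_range'_1] at hk hl
      have hk' : k < n := by
        rcases hk with hk | hk
        · omega
        · simp at hk
          rcases hk with rfl | hk <;> omega
      have hl' : l < n := by
        rcases hl with hl | hl
        · omega
        · simp at hl
          rcases hl with rfl | hl <;> omega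
      exact hinj k l hk' hl' hkl
    · refine List.Nodup.append List.nodup_range' hidx ?_
      intro t ht1 ht2
      rw [List.mem_range'_1] at ht1
      rw [List.mem_append, List.mem_singleton, List.mem_range'_1] at ht2
      rcases ht2 with rfl | ht2 <;> omega
  -- build the cycle and find the chord
  have hint : ∀ t, t ∈ π.support → t ∈ Q.support → t = f i ∨ t = f (i + 1) := by
    intro t htπ htQ
    rcases hπsup t htπ with h | h | h
    exacts [Or.inl h, Or.inr h, absurd (hQmem t htQ) h.1]
  have hedge : ∀ e ∈ π.edges, e ∉ Q.edges := by
    intro e heπ heQ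
    induction e using Sym2.ind with
    | _ a b =>
      rcases hπedge a b heπ with h | h
      · exact h (hQmem a (Q.fst_mem_support_of_mem_edges heQ))
      · exact h (hQmem b (Q.snd_mem_support_of_mem_edges heQ))
  have hWcyc : (π.append Q).IsCycle := isCycle_append_of hne hπpath hQpath hint hedge
  have hiW : f i ∈ (π.append Q).support := (π.append Q).start_mem_support
  have hjW : f (i + 1) ∈ (π.append Q).support := by
    rw [Walk.mem_support_append_iff]; exact Or.inl π.end_mem_support
  have hchord := hch (f i) (π.append Q) hWcyc (f i) hiW (f (i + 1)) hjW (hadj i (by omega))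
  have hedgemem : s(f i, f (i + 1)) ∈ (π.append Q).edges :=
    ((π.append Q).mem_edges_toSubgraph).mp (SimpleGraph.Subgraph.mem_edgeSet.mpr hchord)
  rw [Walk.edges_append, List.mem_append] at hedgemem
  rcases hedgemem with hmem' | hmem'
  · rcases hπedge _ _ hmem' with h | h
    exacts [h (hmem i (by omega)), h (hmem (i + 1) (by omega))]
  · obtain ⟨k, hk, hkr, hkeq⟩ := hQedges _ hmem'
    rw [Sym2.eq_iff] at hkeq
    rcases hkeq with ⟨h1, h2⟩ | ⟨h1, h2⟩
    · have := hinj i k (by omega) hk h1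
      omega
    · -- h1 : f i = f (k+1), h2 : f (i+1) = f k
      have hk1 := hinj (i + 1) k (by omega) hk h2
      rcases Nat.lt_or_ge (k + 1) n with hlt | hge
      · have := hinj i (k + 1) (by omega) hlt h1
        omega
      · have hkn : k + 1 = n := by omega
        rw [hkn, hfn0] at h1
        have := hinj i 0 (by omega) (by omega) h1
        omega

lemma masterML [Fintype V] [DecidableRel G.Adj] (h2 : TwoConnected G) (hch : Chordless G)
    {c : V} {Z : G.Walk c c} (hZ : Z.IsCycle)
    (hdeg : ∀ v ∈ Z.support, v ≠ c → 3 ≤ G.degree v) : False := by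
  classical
  set n := Z.length with hn
  set f := Z.getVert with hf
  have hn3 : 3 ≤ n := hZ.three_le_length
  have hadj : ∀ k, k < n → G.Adj (f k) (f (k + 1)) := fun k hk => Z.adj_getVert_succ hk
  have hinj : ∀ k l, k < n → l < n → f k = f l → k = l :=
    fun k l hk hl h => cycle_getVert_inj hZ hk hl h
  have hfn0 : f n = f 0 := by rw [hf, Walk.getVert_length, Walk.getVert_zero]
  have hf0c : f 0 = c := Z.getVert_zero
  have hmem : ∀ k, k ≤ n → f k ∈ Z.support := fun k hk => getVert_mem_support' Z hk
  -- every interior position has an off-cycle neighbour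
  have hoff : ∀ i, 0 < i → i < n → ∃ u, u ∉ Z.support ∧ G.Adj (f i) u := by
    intro i h0 hi
    by_contra hno
    push_neg at hno
    have hfine : f i ≠ c := by
      intro h
      have : f i = f 0 := by rw [h, hf0c]
      have := hinj i 0 hi (by omega) this
      omega
    have hdeg3 : 3 ≤ G.degree (f i) := hdeg (f i) (hmem i (le_of_lt hi)) hfine
    have hsub : G.neighborFinset (f i) ⊆ {f (i - 1), f (i + 1)} := by
      intro w hw
      rw [SimpleGraph.mem_neighborFinset] at hw
      have hwS : w ∈ Z.support := by
        by_contra hws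
        exact hno w hws hw
      have hts := hch c Z hZ (f i) (hmem i (le_of_lt hi)) w hwS hw
      rw [Z.toSubgraph_adj_iff] at hts
      obtain ⟨k, hkeq, hk⟩ := hts
      rw [Sym2.eq_iff] at hkeq
      rcases hkeq with ⟨h1, h2⟩ | ⟨h1, h2⟩
      · -- f k = f i, f (k+1) = w
        have hki : k = i := hinj k i hk hi h1
        have h2' : f (i + 1) = w := by rw [← hki]; exact h2
        rw [← h2']
        simp
      · -- f k = w, f (k+1) = f i
        rcases Nat.lt_or_ge (k + 1) n with hlt | hge
        · have hki : k + 1 = i := hinj (k + 1) i hlt hi h2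
          have h1' : f k = w := h1
          have : w = f (i - 1) := by rw [← h1']; congr 1; omega
          rw [this]
          simp
        · have hkn : k + 1 = n := by omega
          have h2' : f (k + 1) = f i := h2
          rw [hkn, hfn0] at h2'
          have := hinj 0 i (by omega) hi h2'
          omega
    have hle := Finset.card_le_card hsub
    have h2' : ({f (i - 1), f (i + 1)} : Finset V).card ≤ 2 :=
      le_trans (Finset.card_insert_le _ _) (by simp)
    rw [← SimpleGraph.card_neighborFinset_eq_degree] at hdeg3
    omega
  -- every interior position has a partner attachment
  have hpart : ∀ i, 0 < i → i < n → ∃ u j, Att Z u i ∧ Att Z u j ∧ j ≠ i := by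
    intro i h0 hi
    obtain ⟨u, huS, huadj⟩ := hoff i h0 hi
    have hAui : Att Z u i := ⟨hi, u, rch_refl huS, huadj.symm⟩
    obtain ⟨j₁, j₂, hj12, hA1, hA2⟩ := exists_two_att h2 hZ huS
    rcases eq_or_ne j₁ i with rfl | hne1
    · exact ⟨u, j₂, hAui, hA2, fun h => hj12 h.symm⟩
    · exact ⟨u, j₁, hAui, hA1, hne1⟩
  -- least position with an earlier partner
  have hex : ∃ m, ∃ j u, j < m ∧ Att Z u m ∧ Att Z u j := by
    obtain ⟨u, j, hA, hAj, hjne⟩ := hpart (n - 1) (by omega) (by omega)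
    have hjn : j < n := hAj.1
    refine ⟨n - 1, j, u, by omega, hA, hAj⟩
  set m₀ := Nat.find hex with hm₀def
  obtain ⟨c₂, u_b, hc₂lt0, hAbm0, hAbc⟩ := Nat.find_spec hex
  have hc₂lt : c₂ < m₀ := hc₂lt0
  have hAbm : Att Z u_b m₀ := hAbm0
  clear hc₂lt0 hAbm0
  have hmin : ∀ m, m < m₀ → ¬ ∃ j u, j < m ∧ Att Z u m ∧ Att Z u j :=
    fun m hm => Nat.find_min hex hm
  have hm₀n : m₀ < n := hAbm.1
  have hc₂n : c₂ < n := hAbc.1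
  have hm₀2 : 2 ≤ m₀ := by
    rcases Nat.lt_or_ge m₀ 2 with h | h
    · exfalso
      have hm1 : m₀ = 1 := by omega
      have hc₂0 : c₂ = 0 := by omega
      rw [hm1] at hAbm
      rw [hc₂0] at hAbc
      exact no_adjacent_att hch hZ (by omega) hAbc hAbm
    · exact h
  set a := m₀ - 1 with ha
  have ham : m₀ = a + 1 := by omega
  rw [ham] at hAbm hc₂lt
  obtain ⟨u_a, b₂, hAa, hAab, hbne⟩ := hpart a (by omega) (by omega)
  have hb₂n : b₂ < n := hAab.1
  have hbgt : a < b₂ := by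
    rcases Nat.lt_or_ge a b₂ with h | h
    · exact h
    · exfalso
      exact hmin a (by omega) ⟨b₂, u_a, by omega, hAa, hAab⟩
  have hbne2 : b₂ ≠ a + 1 := by
    intro h
    rw [h] at hAab
    exact no_adjacent_att hch hZ (by omega) hAa hAab
  have hcnea : c₂ ≠ a := by
    intro h
    rw [h] at hAbc
    exact no_adjacent_att hch hZ (by omega) hAbc hAbm
  have hc₂a : c₂ < a := by omega
  have hb2 : a + 2 ≤ b₂ := by omega
  have hsep : ¬ Rch Z u_a u_b := by
    intro hr
    exact no_adjacent_att hch hZ (by omega) hAa (rch_att hr hAbm)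
  -- paths through the two components
  have hne_b : f (a + 1) ≠ f c₂ := fun h => by
    have := hinj (a + 1) c₂ (by omega) hc₂n h; omega
  have hne_a : f a ≠ f b₂ := fun h => by
    have := hinj a b₂ (by omega) hb₂n h; omega
  obtain ⟨πb, hπbpath, hπbsup, hπbedge⟩ := att_path hAbm hAbc hne_b
  obtain ⟨πa, hπapath, hπasup, hπaedge⟩ := att_path hAa hAab hne_a
  -- the two arcs
  have hs1 : ∀ k, c₂ ≤ k → k < c₂ + (a - c₂) → G.Adj (f k) (f (k + 1)) :=
    fun k hk hk' => hadj k (by omega)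
  have hs2 : ∀ k, a + 1 ≤ k → k < (a + 1) + (b₂ - (a + 1)) → G.Adj (f k) (f (k + 1)) :=
    fun k hk hk' => hadj k (by omega)
  set seg1 : G.Walk (f c₂) (f a) :=
    (walkSeg G f c₂ (a - c₂) hs1).copy rfl (congrArg f (by omega)) with hseg1
  set seg2 : G.Walk (f (a + 1)) (f b₂) :=
    (walkSeg G f (a + 1) (b₂ - (a + 1)) hs2).copy rfl (congrArg f (by omega)) with hseg2
  have hseg1sup : seg1.support = (List.range' c₂ (a - c₂ + 1)).map f := by
    rw [hseg1, Walk.support_copy, walkSeg_support]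
  have hseg2sup : seg2.support = (List.range' (a + 1) (b₂ - (a + 1) + 1)).map f := by
    rw [hseg2, Walk.support_copy, walkSeg_support]
  have hseg1edges : seg1.edges = (List.range' c₂ (a - c₂)).map (fun k => s(f k, f (k + 1))) := by
    rw [hseg1, Walk.edges_copy, walkSeg_edges]
  have hseg2edges : seg2.edges
      = (List.range' (a + 1) (b₂ - (a + 1))).map (fun k => s(f k, f (k + 1))) := by
    rw [hseg2, Walk.edges_copy, walkSeg_edges]
  have hseg1mem : ∀ t ∈ seg1.support, ∃ k, c₂ ≤ k ∧ k ≤ a ∧ t = f k := by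
    intro t ht
    rw [hseg1sup, List.mem_map] at ht
    obtain ⟨k, hk, rfl⟩ := ht
    rw [List.mem_range'_1] at hk
    exact ⟨k, by omega, by omega, rfl⟩
  have hseg2mem : ∀ t ∈ seg2.support, ∃ k, a + 1 ≤ k ∧ k ≤ b₂ ∧ t = f k := by
    intro t ht
    rw [hseg2sup, List.mem_map] at ht
    obtain ⟨k, hk, rfl⟩ := ht
    rw [List.mem_range'_1] at hk
    exact ⟨k, by omega, by omega, rfl⟩
  have hseg1path : seg1.IsPath := by
    rw [hseg1, Walk.isPath_copy]
    exact walkSeg_isPath f c₂ (a - c₂) hs1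
      (fun k l hk hk' hl hl' h => hinj k l (by omega) (by omega) h)
  have hseg2path : seg2.IsPath := by
    rw [hseg2, Walk.isPath_copy]
    exact walkSeg_isPath f (a + 1) (b₂ - (a + 1)) hs2
      (fun k l hk hk' hl hl' h => hinj k l (by omega) (by omega) h)
  -- assemble the cycle
  have hP1path : (πb.append seg1).IsPath := by
    refine isPath_append_of hπbpath hseg1path ?_
    intro t htb hts
    obtain ⟨k, hk1, hk2, rfl⟩ := hseg1mem t hts
    rcases hπbsup _ htb with h | h | h
    · exact absurd (hinj k (a + 1) (by omega) (by omega) h) (by omega)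
    · exact h
    · exact absurd (hmem k (by omega)) h.1
  have hPbigpath : ((πb.append seg1).append πa).IsPath := by
    refine isPath_append_of hP1path hπapath ?_
    intro t htp hta
    rw [Walk.mem_support_append_iff] at htp
    rcases hπasup _ hta with h | h | h
    · exact h
    · -- t = f b₂
      exfalso
      rcases htp with htb | hts
      · rcases hπbsup _ htb with h' | h' | h'
        · rw [h] at h'; exact absurd (hinj b₂ (a + 1) hb₂n (by omega) h') (by omega)
        · rw [h] at h'; exact absurd (hinj b₂ c₂ hb₂n hc₂n h') (by omega)
        · exact h'.1 (h ▸ hmem b₂ (by omega))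
      · obtain ⟨k, hk1, hk2, hkt⟩ := hseg1mem t hts
        rw [h] at hkt
        exact absurd (hinj b₂ k hb₂n (by omega) hkt) (by omega)
    · -- t off the cycle, in component of u_a
      exfalso
      rcases htp with htb | hts
      · rcases hπbsup _ htb with h' | h' | h'
        · exact h.1 (h' ▸ hmem (a + 1) (by omega))
        · exact h.1 (h' ▸ hmem c₂ (by omega))
        · exact hsep (rch_trans h.2 (rch_symm h'.2))
      · obtain ⟨k, hk1, hk2, rfl⟩ := hseg1mem t hts
        exact h.1 (hmem k (by omega))
  have hWcyc : (((πb.append seg1).append πa).append seg2.reverse).IsCycle := by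
    refine isCycle_append_of ?_ hPbigpath hseg2path.reverse ?_ ?_
    · intro h
      exact absurd (hinj (a + 1) b₂ (by omega) hb₂n h) (by omega)
    · intro t htp htr
      rw [Walk.support_reverse, List.mem_reverse] at htr
      obtain ⟨l, hl1, hl2, rfl⟩ := hseg2mem t htr
      rw [Walk.mem_support_append_iff, Walk.mem_support_append_iff] at htp
      rcases htp with (htb | hts) | hta
      · rcases hπbsup _ htb with h' | h' | h'
        · left; exact h'
        · exact absurd (hinj l c₂ (by omega) hc₂n h') (by omega)
        · exact absurd (hmem l (by omega)) h'.1
      · obtain ⟨k, hk1, hk2, hkt⟩ := hseg1mem _ hts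
        exact absurd (hinj k l (by omega) (by omega) hkt.symm) (by omega)
      · rcases hπasup _ hta with h' | h' | h'
        · exact absurd (hinj l a (by omega) (by omega) h') (by omega)
        · right; exact h'
        · exact absurd (hmem l (by omega)) h'.1
    · intro e he her
      rw [Walk.edges_reverse, List.mem_reverse] at her
      rw [hseg2edges, List.mem_map] at her
      obtain ⟨l, hl, hle⟩ := her
      rw [List.mem_range'_1] at hl
      rw [Walk.edges_append, Walk.edges_append, List.mem_append, List.mem_append] at he
      rcases he with (heb | hes) | hea
      · rcases hπbedge _ _ (by rw [← hle] at heb; exact heb) with h | h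
        · exact h (hmem l (by omega))
        · exact h (hmem (l + 1) (by omega))
      · rw [hseg1edges, List.mem_map] at hes
        obtain ⟨k, hk, hke⟩ := hes
        rw [List.mem_range'_1] at hk
        have hkl : s(f k, f (k + 1)) = s(f l, f (l + 1)) := hke.trans hle.symm
        rw [Sym2.eq_iff] at hkl
        rcases hkl with ⟨h1, h2⟩ | ⟨h1, h2⟩
        · exact absurd (hinj k l (by omega) (by omega) h1) (by omega)
        · exact absurd (hinj k (l + 1) (by omega) (by omega) h1) (by omega)
      · rcases hπaedge _ _ (by rw [← hle] at hea; exact hea) with h | h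
        · exact h (hmem l (by omega))
        · exact h (hmem (l + 1) (by omega))
  -- the chord
  set W := ((πb.append seg1).append πa).append seg2.reverse with hW
  have hfaW : f a ∈ W.support := by
    rw [hW, Walk.mem_support_append_iff, Walk.mem_support_append_iff,
      Walk.mem_support_append_iff]
    left; left; right
    rw [hseg1sup, List.mem_map]
    exact ⟨a, by rw [List.mem_range'_1]; omega, rfl⟩
  have hfa1W : f (a + 1) ∈ W.support := W.start_mem_support
  have hchord := hch (f (a + 1)) W hWcyc (f a) hfaW (f (a + 1)) hfa1W (hadj a (by omega))
  have hedgemem : s(f a, f (a + 1)) ∈ W.edges :=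
    (W.mem_edges_toSubgraph).mp (SimpleGraph.Subgraph.mem_edgeSet.mpr hchord)
  rw [hW, Walk.edges_append, Walk.edges_append, Walk.edges_append,
    List.mem_append, List.mem_append, List.mem_append] at hedgemem
  rcases hedgemem with ((heb | hes) | hea) | her
  · rcases hπbedge _ _ heb with h | h
    · exact h (hmem a (by omega))
    · exact h (hmem (a + 1) (by omega))
  · rw [hseg1edges, List.mem_map] at hes
    obtain ⟨k, hk, hke⟩ := hes
    rw [List.mem_range'_1] at hk
    rw [Sym2.eq_iff] at hke
    rcases hke with ⟨h1, h2⟩ | ⟨h1, h2⟩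
    · exact absurd (hinj k a (by omega) (by omega) h1) (by omega)
    · exact absurd (hinj k (a + 1) (by omega) (by omega) h1) (by omega)
  · rcases hπaedge _ _ hea with h | h
    · exact h (hmem a (by omega))
    · exact h (hmem (a + 1) (by omega))
  · rw [Walk.edges_reverse, List.mem_reverse, hseg2edges, List.mem_map] at her
    obtain ⟨l, hl, hle⟩ := her
    rw [List.mem_range'_1] at hl
    rw [Sym2.eq_iff] at hle
    rcases hle with ⟨h1, h2⟩ | ⟨h1, h2⟩
    · exact absurd (hinj l a (by omega) (by omega) h1) (by omega)
    · have hla : l = a + 1 := hinj l (a + 1) (by omega) (by omega) h1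
      have := hinj (l + 1) a (by omega) (by omega) h2
      omega

/-- A finite graph in which every vertex except possibly one has degree ≥ 2,
and which has a vertex different from the exceptional one, contains a cycle. -/
lemma exists_cycle_of_degrees {α : Type*} [Fintype α] (H : SimpleGraph α)
    [DecidableRel H.Adj] (x₀ : α) (hne : ∃ v : α, v ≠ x₀)
    (hdeg : ∀ v : α, v ≠ x₀ → 2 ≤ H.degree v) :
    ∃ (w : α) (Z : H.Walk w w), Z.IsCycle := by
  classical
  set P : ℕ → Prop := fun L => ∃ (a b : α) (p : H.Walk a b), p.IsPath ∧ p.length = L with hP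
  have hbound : ∀ L, P L → L < Fintype.card α := by
    rintro L ⟨a, b, p, hp, rfl⟩
    exact hp.length_lt
  obtain ⟨v₀, hv₀⟩ := hne
  obtain ⟨y, hy⟩ : ∃ y, H.Adj v₀ y :=
    (H.degree_pos_iff_exists_adj v₀).mp (by have := hdeg v₀ hv₀; omega)
  have hP1 : P 1 := ⟨v₀, y, Walk.cons hy Walk.nil,
    by rw [Walk.cons_isPath_iff]; simp [hy.ne], rfl⟩
  set N := Nat.findGreatest P (Fintype.card α) with hN
  have hN1 : 1 ≤ N := Nat.le_findGreatest (le_of_lt (hbound 1 hP1)) hP1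
  have hNP : P N := Nat.findGreatest_spec (le_of_lt (hbound 1 hP1)) hP1
  have hmax : ∀ L, P L → L ≤ N := fun L hL => Nat.le_findGreatest (le_of_lt (hbound L hL)) hL
  obtain ⟨a, b, p, hp, hplen⟩ := hNP
  have key : ∀ (a b : α) (p : H.Walk a b), p.IsPath → p.length = N → a ≠ x₀ →
      ∃ (w : α) (Z : H.Walk w w), Z.IsCycle := by
    intro a b p hp hplen ha
    cases p with
    | nil => rw [Walk.length_nil] at hplen; omega
    | @cons _ s _ hadj q =>
      have h2 : 2 ≤ (H.neighborFinset a).card := by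
        rw [SimpleGraph.card_neighborFinset_eq_degree]
        exact hdeg a ha
      have hs : s ∈ H.neighborFinset a := by
        rw [SimpleGraph.mem_neighborFinset]; exact hadj
      obtain ⟨y', hymem, hys⟩ := Finset.exists_mem_ne (show 1 < (H.neighborFinset a).card by omega) s
      have hyadj : H.Adj a y' := by rwa [SimpleGraph.mem_neighborFinset] at hymem
      have hya : y' ≠ a := hyadj.ne'
      have hysup : y' ∈ (Walk.cons hadj q).support := by
        by_contra hyn
        have hext : (Walk.cons hyadj.symm (Walk.cons hadj q)).IsPath := by
          rw [Walk.cons_isPath_iff]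
          exact ⟨hp, hyn⟩
        have hle := hmax _ ⟨y', _, _, hext, rfl⟩
        rw [Walk.length_cons, Walk.length_cons] at hle
        rw [Walk.length_cons] at hplen
        omega
      rw [Walk.support_cons, List.mem_cons] at hysup
      rcases hysup with h | hysup
      · exact absurd h hya
      have hqpath : q.IsPath := ((Walk.cons_isPath_iff _ _).mp hp).1
      have hanq : a ∉ q.support := ((Walk.cons_isPath_iff _ _).mp hp).2
      have hrpath : (q.takeUntil y' hysup).IsPath := hqpath.takeUntil hysup
      have harn : a ∉ (q.takeUntil y' hysup).support :=
        fun h => hanq (q.support_takeUntil_subset hysup h)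
      have hQpath : (Walk.cons hadj (q.takeUntil y' hysup)).IsPath := by
        rw [Walk.cons_isPath_iff]
        exact ⟨hrpath, harn⟩
      refine ⟨y', Walk.cons hyadj.symm (Walk.cons hadj (q.takeUntil y' hysup)), ?_⟩
      rw [Walk.cons_isCycle_iff]
      refine ⟨hQpath, fun hmem' => ?_⟩
      rw [Walk.edges_cons, List.mem_cons] at hmem'
      rcases hmem' with h | h
      · rw [Sym2.eq_iff] at h
        rcases h with ⟨h1, h2⟩ | ⟨h1, h2⟩
        · exact hya h1
        · exact hys h1
      · exact harn ((q.takeUntil y' hysup).snd_mem_support_of_mem_edges h)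
  rcases eq_or_ne a x₀ with rfl | ha
  · have hab : a ≠ b := by
      intro h
      subst h
      cases p with
      | nil => rw [Walk.length_nil] at hplen; omega
      | cons hadj q =>
        exact ((Walk.cons_isPath_iff _ _).mp hp).2 q.end_mem_support
    exact key b a p.reverse hp.reverse (by rw [Walk.length_reverse]; exact hplen)
      (fun h => hab (h ▸ rfl))
  · exact key a b p hp hplen ha

end MinTwoConn

open SimpleGraph in
/-- In a minimally 2-connected graph (2-connected and chordless), for every vertex
`x` there are vertices `u, v, w` with `v, w` distinct neighbours of `u`, both of
degree exactly 2, and `x ∉ {v, w}`. -/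
theorem minimally_two_connected_degree_two_neighbours
    {V : Type*} [Fintype V] (G : SimpleGraph V) [DecidableRel G.Adj]
    (h2 : TwoConnected G) (hch : Chordless G) (x : V) :
    ∃ u v w : V, v ≠ w ∧ G.Adj u v ∧ G.Adj u w ∧
      G.degree v = 2 ∧ G.degree w = 2 ∧ x ≠ v ∧ x ≠ w := by
  classical
  by_cases hall : ∀ v : V, v ≠ x → G.degree v = 2
  · have hx2 : 2 ≤ G.degree x := MinTwoConn.two_le_degree h2 x
    rw [← SimpleGraph.card_neighborFinset_eq_degree] at hx2
    obtain ⟨v, hv, w, hw, hvw⟩ := Finset.one_lt_card.mp (show 1 < (G.neighborFinset x).card by omega)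
    rw [SimpleGraph.mem_neighborFinset] at hv hw
    exact ⟨x, v, w, hvw, hv, hw, hall v hv.ne', hall w hw.ne', hv.ne, hw.ne⟩
  · push_neg at hall
    obtain ⟨y₀, hy₀x, hy₀d⟩ := hall
    by_contra hcon
    push_neg at hcon
    set B' : Set V := {v | v = x ∨ G.degree v ≠ 2} with hB'
    set H : SimpleGraph ↥B' := G.comap ((↑) : ↥B' → V) with hH
    have hadj_iff : ∀ (a b : ↥B'), H.Adj a b ↔ G.Adj a.1 b.1 := fun a b => Iff.rfl
    set x₀ : ↥B' := ⟨x, Or.inl rfl⟩ with hx₀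
    have hne : ∃ v : ↥B', v ≠ x₀ :=
      ⟨⟨y₀, Or.inr hy₀d⟩, fun h => hy₀x (congrArg Subtype.val h)⟩
    have hHdeg : ∀ v : ↥B', v ≠ x₀ → 2 ≤ H.degree v := by
      rintro ⟨v, hvB⟩ hvne
      have hvx : v ≠ x := fun h => hvne (Subtype.ext h)
      have hv3 : 3 ≤ G.degree v := by
        rcases hvB with h | h
        · exact absurd h hvx
        · have := MinTwoConn.two_le_degree h2 v
          omega
      have hbad : ((G.neighborFinset v).filter (fun w => ¬ w ∈ B')).card ≤ 1 := by
        rw [Finset.card_le_one]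
        intro a ha b hb
        rw [Finset.mem_filter, SimpleGraph.mem_neighborFinset] at ha hb
        have ha2 : a ≠ x ∧ G.degree a = 2 := by
          have := ha.2
          rw [hB', Set.mem_setOf_eq] at this
          push_neg at this
          exact this
        have hb2 : b ≠ x ∧ G.degree b = 2 := by
          have := hb.2
          rw [hB', Set.mem_setOf_eq] at this
          push_neg at this
          exact this
        by_contra hab
        exact hb2.1 (hcon v a b hab ha.1 hb.1 ha2.2 hb2.2 (Ne.symm ha2.1)).symm
      have hsplit := Finset.card_filter_add_card_filter_not
        (s := G.neighborFinset v) (p := fun w => w ∈ B')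
      have hgood : 2 ≤ ((G.neighborFinset v).filter (fun w => w ∈ B')).card := by
        rw [← SimpleGraph.card_neighborFinset_eq_degree] at hv3
        omega
      have hcard : ((G.neighborFinset v).filter (fun w => w ∈ B')).card
          ≤ (H.neighborFinset ⟨v, hvB⟩).card := by
        apply Finset.card_le_card_of_injOn (fun w => if h : w ∈ B' then ⟨w, h⟩ else x₀)
        · intro w hw
          rw [Finset.mem_coe, Finset.mem_filter, SimpleGraph.mem_neighborFinset] at hw
          rw [Finset.mem_coe, SimpleGraph.mem_neighborFinset]
          simp only [dif_pos hw.2]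
          exact hw.1
        · intro w1 h1 w2 h2 he
          rw [Finset.mem_coe, Finset.mem_filter] at h1 h2
          simp only [dif_pos h1.2, dif_pos h2.2, Subtype.mk.injEq] at he
          exact he
      rw [← SimpleGraph.card_neighborFinset_eq_degree]
      omega
    obtain ⟨w0, Zs, hZs⟩ := MinTwoConn.exists_cycle_of_degrees H x₀ hne hHdeg
    have hφinj : Function.Injective ((↑) : ↥B' → V) := Subtype.val_injective
    set φ : H →g G := SimpleGraph.Hom.comap ((↑) : ↥B' → V) G with hφ
    have hZGcyc : ((Zs.map φ).IsCycle) :=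
      (Walk.map_isCycle_iff_of_injective (by exact hφinj)).mpr hZs
    have hZGsup : ∀ t ∈ (Zs.map φ).support, t ∈ B' := by
      intro t ht
      rw [Walk.support_map, List.mem_map] at ht
      obtain ⟨⟨t', ht'⟩, _, rfl⟩ := ht
      exact ht'
    have hdegB : ∀ t ∈ B', t ≠ x → 3 ≤ G.degree t := by
      intro t htB htx
      rcases htB with h | h
      · exact absurd h htx
      · have := MinTwoConn.two_le_degree h2 t
        omega
    by_cases hxs : x ∈ (Zs.map φ).support
    · have hZ'cyc : ((Zs.map φ).rotate x hxs).IsCycle := hZGcyc.rotate hxs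
      apply MinTwoConn.masterML h2 hch hZ'cyc
      intro v hv hvx
      have hv' : v ∈ (Zs.map φ).support := by
        rw [Walk.support_eq_cons] at hv
        rcases List.mem_cons.mp hv with rfl | hv
        · exact absurd rfl hvx
        · exact List.tail_subset _
            (((Zs.map φ).support_rotate x hxs).mem_iff.mp hv)
      exact hdegB v (hZGsup v hv') hvx
    · apply MinTwoConn.masterML h2 hch hZGcyc
      intro v hv _
      have hvB := hZGsup v hv
      have hvx : v ≠ x := fun h => hxs (h ▸ hv)
      exact hdegB v hvB hvx
end

section
/- Let G be a bipartite graph on n vertices and let t be a positive integer. Then for every assignment L of t-element colour lists to the vertices of G, there exists an induced subgraph of G on at least (1 - (1/2)^t)·n vertices that is L-list colourable. -/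
/-- For every `t`-element list assignment `L`, a bipartite graph on `n` vertices
has an induced subgraph on at least `(1 - (1/2)^t)·n` vertices that is `L`-list
colourable. -/
theorem partial_list_colouring_bipartite {V : Type*} [Fintype V]
    (G : SimpleGraph V)
    (hbip : ∃ f : V → Bool, ∀ u v, G.Adj u v → f u ≠ f v)
    (t : ℕ) (ht : 0 < t)
    (L : V → Finset ℕ) (hL : ∀ v, (L v).card = t) :
    ∃ S : Finset V,
      (1 - (1 / 2 : ℚ) ^ t) * Fintype.card V ≤ S.card ∧
      ∃ c : V → ℕ, (∀ v ∈ S, c v ∈ L v) ∧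
        ∀ u ∈ S, ∀ v ∈ S, G.Adj u v → c u ≠ c v := by
  classical
  obtain ⟨f, hf⟩ := hbip
  -- trivial case: no vertices
  rcases isEmpty_or_nonempty V with hV | hV
  · refine ⟨∅, ?_, fun _ => 0, by simp, by simp⟩
    simp only [Fintype.card_eq_zero, Nat.cast_zero, mul_zero, Finset.card_empty,
      Nat.cast_zero, le_refl]
  set n := Fintype.card V with hn
  -- the universe of colours
  set A : Finset ℕ := Finset.univ.biUnion L with hA
  have hsub : ∀ v, L v ⊆ A := fun v => Finset.subset_biUnion_of_mem L (Finset.mem_univ v)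
  obtain ⟨v0⟩ := hV
  have htA : t ≤ A.card := by
    rw [← hL v0]; exact Finset.card_le_card (hsub v0)
  -- the set of functions assigning each colour a side
  set P := A.pi (fun _ => (Finset.univ : Finset Bool)) with hP
  have hPcard : P.card = 2 ^ A.card := by
    simp [hP, Finset.card_pi]
  -- extend a partial function to all of ℕ
  let ext : (∀ a ∈ A, Bool) → ℕ → Bool := fun g a => if h : a ∈ A then g a h else true
  have hext : ∀ (g : ∀ a ∈ A, Bool) (a : ℕ) (h : a ∈ A), ext g a = g a h := by
    intro g a h; simp [ext, h]
  -- a vertex is bad if every colour on its list got the opposite side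
  let bad : (ℕ → Bool) → V → Prop := fun Gg v => ∀ a ∈ L v, Gg a = !f v
  let fail : (∀ a ∈ A, Bool) → ℕ :=
    fun g => (Finset.univ.filter (fun v => bad (ext g) v)).card
  -- key counting: for each vertex, the number of side-assignments making it bad
  have key : ∀ v : V, (∑ g ∈ P, (if bad (ext g) v then (1 : ℕ) else 0))
      = 2 ^ (A.card - t) := by
    intro v
    have step1 : ∀ g ∈ P, (if bad (ext g) v then (1 : ℕ) else 0)
        = ∏ x ∈ A.attach, (if (x : ℕ) ∈ L v then
            (if g x x.2 = !f v then (1 : ℕ) else 0) else 1) := by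
      intro g _
      by_cases hb : bad (ext g) v
      · rw [if_pos hb]
        symm
        apply Finset.prod_eq_one
        intro x _
        split_ifs with h1 h2
        · rfl
        · exact absurd (by rw [← hext g x x.2]; exact hb x h1) h2
        · rfl
      · rw [if_neg hb]
        symm
        simp only [bad, not_forall] at hb
        obtain ⟨a, ha, hne⟩ := hb
        apply Finset.prod_eq_zero (Finset.mem_attach A ⟨a, hsub v ha⟩)
        rw [if_pos ha, if_neg]
        rw [← hext g a (hsub v ha)]
        exact hne
    rw [Finset.sum_congr rfl step1]
    rw [hP, ← Finset.prod_sum A (fun _ => (Finset.univ : Finset Bool))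
      (fun a b => if a ∈ L v then (if b = !f v then (1 : ℕ) else 0) else 1)]
    have inner : ∀ a ∈ A, (∑ b : Bool, (if a ∈ L v then
        (if b = !f v then (1 : ℕ) else 0) else 1)) = if a ∈ L v then 1 else 2 := by
      intro a _
      by_cases h : a ∈ L v <;> simp [h, Finset.sum_ite_eq']
    rw [Finset.prod_congr rfl inner, Finset.prod_ite, Finset.prod_const_one,
      Finset.prod_const, one_mul]
    congr 1
    have : Finset.filter (fun a => ¬ a ∈ L v) A = A \ L v := by
      ext a; simp [Finset.mem_sdiff, and_comm]
    rw [this, Finset.card_sdiff_of_subset (hsub v), hL v]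
  -- averaging: some g has few bad vertices
  have havg : ∑ g ∈ P, fail g = n * 2 ^ (A.card - t) := by
    have : ∀ g : (∀ a ∈ A, Bool), fail g
        = ∑ v : V, (if bad (ext g) v then (1 : ℕ) else 0) := by
      intro g
      simp only [fail]
      rw [Finset.card_filter]
    rw [Finset.sum_congr rfl (fun g _ => this g), Finset.sum_comm]
    rw [Finset.sum_congr rfl (fun v _ => key v)]
    simp [hn, Finset.card_univ, mul_comm]
  obtain ⟨g, hgP, hg⟩ : ∃ g ∈ P, fail g * 2 ^ t ≤ n := by
    by_contra hcon
    push_neg at hcon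
    have h1 : ∀ g ∈ P, n + 1 ≤ fail g * 2 ^ t := fun g hgp => hcon g hgp
    have h2 : P.card * (n + 1) ≤ ∑ g ∈ P, fail g * 2 ^ t := by
      calc P.card * (n + 1) = ∑ _g ∈ P, (n + 1) := by rw [Finset.sum_const, smul_eq_mul]
        _ ≤ ∑ g ∈ P, fail g * 2 ^ t := Finset.sum_le_sum h1
    rw [← Finset.sum_mul, havg, hPcard] at h2
    have h3 : n * 2 ^ (A.card - t) * 2 ^ t = n * 2 ^ A.card := by
      rw [mul_assoc, ← pow_add, Nat.sub_add_cancel htA]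
    rw [h3] at h2
    have h4 : 2 ^ A.card * (n + 1) ≤ 2 ^ A.card * n := by linarith [h2]
    have h5 : n + 1 ≤ n := Nat.le_of_mul_le_mul_left h4 (Nat.pow_pos (by norm_num))
    omega
  -- the surviving set
  set S : Finset V := Finset.univ.filter (fun v => ¬ bad (ext g) v) with hS
  have hcardsum : fail g + S.card = n := by
    rw [hS]
    simpa [fail, hn] using Finset.card_filter_add_card_filter_not
      (s := (Finset.univ : Finset V)) (p := fun v => bad (ext g) v)
  -- every surviving vertex has a colour on its side
  have hgood : ∀ v ∈ S, ∃ a ∈ L v, ext g a = f v := by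
    intro v hv
    rw [hS, Finset.mem_filter] at hv
    have hb := hv.2
    simp only [bad, not_forall] at hb
    obtain ⟨a, ha, hne⟩ := hb
    refine ⟨a, ha, ?_⟩
    revert hne
    cases (ext g a) <;> cases (f v) <;> simp
  refine ⟨S, ?_, ?_⟩
  · -- the cardinality bound
    have h2 : (fail g : ℚ) * 2 ^ t ≤ n := by exact_mod_cast hg
    have h2t : (0 : ℚ) < 2 ^ t := by positivity
    have hfq : (fail g : ℚ) ≤ n / 2 ^ t := (le_div_iff₀ h2t).2 h2
    have hSq : (S.card : ℚ) = n - fail g := by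
      have := hcardsum
      push_cast [← this]
      ring
    rw [hSq]
    have : (1 - (1 / 2 : ℚ) ^ t) * n = n - n / 2 ^ t := by
      rw [div_pow, one_pow]
      ring
    rw [this]
    linarith
  · -- the colouring
    let c : V → ℕ := fun v => if h : ∃ a ∈ L v, ext g a = f v then h.choose else 0
    have hc : ∀ v ∈ S, c v ∈ L v ∧ ext g (c v) = f v := by
      intro v hv
      have h := hgood v hv
      simp only [c, dif_pos h]
      exact ⟨h.choose_spec.1, h.choose_spec.2⟩
    refine ⟨c, fun v hv => (hc v hv).1, ?_⟩
    intro u hu v hv hadj heq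
    have h1 := (hc u hu).2
    have h2 := (hc v hv).2
    rw [heq, h2] at h1
    exact hf u v hadj h1.symm
end

section
/- Let G be a graph on n vertices with chromatic number χ and let t be a positive integer. Then for every assignment L of t-element colour lists to the vertices of G, there exists an induced subgraph of G on at least (1 - ((χ-1)/χ)^t)·n vertices that is L-list colourable. -/
/-- For every `t`-element list assignment `L`, a graph on `n` vertices with
chromatic number `χ` has an induced subgraph on at least `(1 - ((χ-1)/χ)^t)·n`
vertices that is `L`-list colourable. -/
theorem partial_list_colouring_chromatic_bound {V : Type*} [Fintype V]
    (G : SimpleGraph V) (χ : ℕ) (hχ : G.chromaticNumber = χ)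
    (t : ℕ) (ht : 0 < t)
    (L : V → Finset ℕ) (hL : ∀ v, (L v).card = t) :
    ∃ S : Finset V,
      (1 - (((χ : ℚ) - 1) / χ) ^ t) * Fintype.card V ≤ S.card ∧
      ∃ c : V → ℕ, (∀ v ∈ S, c v ∈ L v) ∧
        ∀ u ∈ S, ∀ v ∈ S, G.Adj u v → c u ≠ c v := by
  classical
  rcases isEmpty_or_nonempty V with hV | hV
  · refine ⟨∅, by simp [Fintype.card_eq_zero], fun _ => 0, by simp, by simp⟩
  · have hcol : G.Colorable χ := by
      rw [← SimpleGraph.chromaticNumber_le_iff_colorable]; exact le_of_eq hχ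
    obtain ⟨f⟩ := hcol
    have hχ1 : 0 < χ := (f hV.some).pos
    -- the universe of colours
    set C : Finset ℕ := Finset.univ.biUnion L with hC
    have hLC : ∀ v, L v ⊆ C := fun v α hα =>
      Finset.mem_biUnion.mpr ⟨v, Finset.mem_univ v, hα⟩
    have htC : t ≤ C.card := (hL hV.some) ▸ Finset.card_le_card (hLC hV.some)
    -- count of colours of a fixed list, as elements of C
    have hsv : ∀ v, (Finset.univ.filter (fun a : ↥C => ↑a ∈ L v)).card = t := by
      intro v
      rw [← hL v]
      refine Finset.card_bij (fun a _ => (a : ℕ)) ?_ ?_ ?_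
      · intro a ha; exact (Finset.mem_filter.mp ha).2
      · intro a ha b hb h; exact Subtype.ext h
      · intro b hb; exact ⟨⟨b, hLC v hb⟩, Finset.mem_filter.mpr ⟨Finset.mem_univ _, hb⟩, rfl⟩
    -- counting bad class-assignments for a fixed vertex
    have hbad : ∀ v, (Finset.univ.filter
        (fun i : ↥C → Fin χ => ¬ ∃ a : ↥C, ↑a ∈ L v ∧ i a = f v)).card
        = (χ - 1) ^ t * χ ^ (C.card - t) := by
      intro v
      have heq : Finset.univ.filter
          (fun i : ↥C → Fin χ => ¬ ∃ a : ↥C, ↑a ∈ L v ∧ i a = f v)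
          = Fintype.piFinset (fun a : ↥C =>
              if ↑a ∈ L v then Finset.univ.erase (f v) else Finset.univ) := by
        ext i
        simp only [Finset.mem_filter, Finset.mem_univ, true_and, Fintype.mem_piFinset]
        push_neg
        constructor
        · intro h a
          by_cases ha : ↑a ∈ L v
          · simp [ha, Finset.mem_erase, h a ha]
          · simp [ha]
        · intro h a ha
          have := h a
          simp [ha, Finset.mem_erase] at this
          exact this
      rw [heq, Fintype.card_piFinset]
      have hcards : ∀ a : ↥C,
          (if ↑a ∈ L v then Finset.univ.erase (f v) else Finset.univ).card
          = if ↑a ∈ L v then χ - 1 else χ := by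
        intro a
        by_cases ha : ↑a ∈ L v <;>
          simp [ha, Finset.card_erase_of_mem, Fintype.card_fin]
      simp_rw [hcards]
      rw [Finset.prod_ite, Finset.prod_const, Finset.prod_const, hsv v]
      congr 1
      rw [Finset.filter_not, Finset.card_sdiff_of_subset (Finset.filter_subset _ _), hsv v]
      simp [Fintype.card_coe]
    -- hence the count of assignments good for a fixed vertex
    have hgood : ∀ v, (Finset.univ.filter
        (fun i : ↥C → Fin χ => ∃ a : ↥C, ↑a ∈ L v ∧ i a = f v)).card
        = χ ^ C.card - (χ - 1) ^ t * χ ^ (C.card - t) := by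
      intro v
      have h1 : (Finset.univ.filter
          (fun i : ↥C → Fin χ => ∃ a : ↥C, ↑a ∈ L v ∧ i a = f v)).card +
          (Finset.univ.filter
          (fun i : ↥C → Fin χ => ¬ ∃ a : ↥C, ↑a ∈ L v ∧ i a = f v)).card
          = χ ^ C.card := by
        rw [Finset.card_filter_add_card_filter_not, Finset.card_univ]
        simp [Fintype.card_fun, Fintype.card_coe]
      have h3 := Nat.eq_sub_of_add_eq h1
      rw [hbad v] at h3
      exact h3
    -- total count over all assignments
    have hsum : ∑ i : ↥C → Fin χ,
        (Finset.univ.filter (fun v => ∃ a : ↥C, ↑a ∈ L v ∧ i a = f v)).card =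
        Fintype.card V * (χ ^ C.card - (χ - 1) ^ t * χ ^ (C.card - t)) := by
      have h2 : ∀ i : ↥C → Fin χ,
          (Finset.univ.filter (fun v => ∃ a : ↥C, ↑a ∈ L v ∧ i a = f v)).card
          = ∑ v : V, if ∃ a : ↥C, ↑a ∈ L v ∧ i a = f v then 1 else 0 := by
        intro i; rw [Finset.card_filter]
      simp_rw [h2]
      rw [Finset.sum_comm]
      have h3 : ∀ v : V,
          (∑ i : ↥C → Fin χ, if ∃ a : ↥C, ↑a ∈ L v ∧ i a = f v then 1 else 0)
          = χ ^ C.card - (χ - 1) ^ t * χ ^ (C.card - t) := fun v => by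
        rw [← hgood v, Finset.card_filter]
      simp_rw [h3, Finset.sum_const, Finset.card_univ, smul_eq_mul]
    -- arithmetic facts
    have hχQ : (χ : ℚ) ≠ 0 := Nat.cast_ne_zero.mpr hχ1.ne'
    have hpow : (χ : ℚ) ^ C.card = (χ : ℚ) ^ t * (χ : ℚ) ^ (C.card - t) := by
      rw [← pow_add, Nat.add_sub_cancel' htC]
    have hle : (χ - 1) ^ t * χ ^ (C.card - t) ≤ χ ^ C.card := by
      calc (χ - 1) ^ t * χ ^ (C.card - t) ≤ χ ^ t * χ ^ (C.card - t) :=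
            Nat.mul_le_mul_right _ (Nat.pow_le_pow_left (Nat.sub_le χ 1) t)
        _ = χ ^ C.card := by rw [← pow_add, Nat.add_sub_cancel' htC]
    -- choose a near-average assignment
    obtain ⟨i, hi⟩ : ∃ i : ↥C → Fin χ,
        (1 - (((χ : ℚ) - 1) / χ) ^ t) * Fintype.card V ≤
        ((Finset.univ.filter (fun v => ∃ a : ↥C, ↑a ∈ L v ∧ i a = f v)).card : ℚ) := by
      by_contra hcon
      push_neg at hcon
      have hne : (Finset.univ : Finset (↥C → Fin χ)).Nonempty :=
        ⟨fun _ => ⟨0, hχ1⟩, Finset.mem_univ _⟩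
      have hlt : (∑ i : ↥C → Fin χ,
          ((Finset.univ.filter (fun v => ∃ a : ↥C, ↑a ∈ L v ∧ i a = f v)).card : ℚ)) <
          ∑ _i : ↥C → Fin χ, (1 - (((χ : ℚ) - 1) / χ) ^ t) * Fintype.card V :=
        Finset.sum_lt_sum_of_nonempty hne fun i _ => hcon i
      rw [Finset.sum_const, Finset.card_univ, Fintype.card_fun, Fintype.card_coe,
        Fintype.card_fin, nsmul_eq_mul] at hlt
      push_cast at hlt
      have hsumQ : (∑ i : ↥C → Fin χ,
          ((Finset.univ.filter (fun v => ∃ a : ↥C, ↑a ∈ L v ∧ i a = f v)).card : ℚ))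
          = (Fintype.card V : ℚ) *
            ((χ : ℚ) ^ C.card - ((χ - 1 : ℕ) : ℚ) ^ t * (χ : ℚ) ^ (C.card - t)) := by
        rw [← Nat.cast_sum, hsum]
        push_cast [Nat.cast_sub hle]
        ring
      have hEq : ((χ : ℚ) ^ C.card : ℚ) * ((1 - (((χ : ℚ) - 1) / χ) ^ t) * Fintype.card V)
          = (Fintype.card V : ℚ) *
            ((χ : ℚ) ^ C.card - ((χ - 1 : ℕ) : ℚ) ^ t * (χ : ℚ) ^ (C.card - t)) := by
        rw [Nat.cast_sub hχ1, Nat.cast_one, div_pow, hpow]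
        field_simp
      rw [hsumQ, ← hEq] at hlt
      exact lt_irrefl _ hlt
    refine ⟨_, hi, ?_⟩
    refine ⟨fun v => if h : ∃ a : ↥C, ↑a ∈ L v ∧ i a = f v then (h.choose : ℕ) else 0,
      ?_, ?_⟩
    · intro v hv
      have hg : ∃ a : ↥C, ↑a ∈ L v ∧ i a = f v := (Finset.mem_filter.mp hv).2
      simp only [dif_pos hg]
      exact hg.choose_spec.1
    · intro u hu v hv hadj hc
      have hgu : ∃ a : ↥C, ↑a ∈ L u ∧ i a = f u := (Finset.mem_filter.mp hu).2
      have hgv : ∃ a : ↥C, ↑a ∈ L v ∧ i a = f v := (Finset.mem_filter.mp hv).2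
      simp only [dif_pos hgu, dif_pos hgv] at hc
      have hab : hgu.choose = hgv.choose := Subtype.ext hc
      have hfu : f u = f v := by
        rw [← hgu.choose_spec.2, ← hgv.choose_spec.2, hab]
      exact f.valid hadj hfu
end

section
/- Let G be a graph, let L be a list assignment on its vertices, and suppose S ⊆ V(G) consists of three vertices u, v, w with v, w ∈ N(u), deg_G(v) = deg_G(w) = 2, and each list has size at least 2. If G \ S has an induced subgraph H' on m vertices that is L-list colourable, then G has an induced subgraph on m + 2 vertices that is L-list colourable (namely H' together with v and w). -/
/-- If `u, v, w` are vertices with `v, w` distinct degree-2 neighbours of `u`, all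
lists have size at least 2, and `G \ {u,v,w}` has an induced subgraph on `m`
vertices that is `L`-list colourable, then `G` has an induced subgraph on `m + 2`
vertices that is `L`-list colourable. -/
theorem extend_partial_colouring_by_two {V : Type*} [Fintype V] [DecidableEq V]
    (G : SimpleGraph V) [DecidableRel G.Adj]
    (L : V → Finset ℕ) (hL : ∀ x, 2 ≤ (L x).card)
    (u v w : V) (hvw : v ≠ w) (huv : G.Adj u v) (huw : G.Adj u w)
    (hv : G.degree v = 2) (hw : G.degree w = 2)
    (m : ℕ) (T : Finset V) (hTu : u ∉ T) (hTv : v ∉ T) (hTw : w ∉ T)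
    (hTcard : T.card = m)
    (hTcol : ∃ c : V → ℕ, (∀ x ∈ T, c x ∈ L x) ∧
      ∀ x ∈ T, ∀ y ∈ T, G.Adj x y → c x ≠ c y) :
    ∃ T' : Finset V, T'.card = m + 2 ∧
      ∃ c : V → ℕ, (∀ x ∈ T', c x ∈ L x) ∧
        ∀ x ∈ T', ∀ y ∈ T', G.Adj x y → c x ≠ c y := by
  obtain ⟨c₀, hc₀L, hc₀p⟩ := hTcol
  set Fv : Finset V := (G.neighborFinset v).erase u with hFv
  set Fw : Finset V := (G.neighborFinset w).erase u with hFw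
  have hFvcard : Fv.card = 1 := by
    rw [hFv, Finset.card_erase_of_mem (by simpa using huv.symm)]
    simp [← SimpleGraph.card_neighborFinset_eq_degree] at hv ⊢
    omega
  have hFwcard : Fw.card = 1 := by
    rw [hFw, Finset.card_erase_of_mem (by simpa using huw.symm)]
    simp [← SimpleGraph.card_neighborFinset_eq_degree] at hw ⊢
    omega
  -- choose colour for v
  have hv1 : ¬ (L v ⊆ Fv.image c₀) := fun h => by
    have h1 := Finset.card_le_card h
    have h2 := Finset.card_image_le (s := Fv) (f := c₀)
    have h3 := hL v
    omega
  obtain ⟨cv, hcvL, hcvF⟩ := Finset.not_subset.1 hv1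
  set c₁ : V → ℕ := Function.update c₀ v cv with hc₁
  -- choose colour for w
  have hw1 : ¬ (L w ⊆ Fw.image c₁) := fun h => by
    have h1 := Finset.card_le_card h
    have h2 := Finset.card_image_le (s := Fw) (f := c₁)
    have h3 := hL w
    omega
  obtain ⟨cw, hcwL, hcwF⟩ := Finset.not_subset.1 hw1
  set c₂ : V → ℕ := Function.update c₁ w cw with hc₂
  have huv' : u ≠ v := huv.ne
  have huw' : u ≠ w := huw.ne
  refine ⟨insert v (insert w T), ?_, c₂, ?_, ?_⟩
  · rw [Finset.card_insert_of_notMem (by simp [hvw, hTv]),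
      Finset.card_insert_of_notMem hTw, hTcard]
  · intro x hx
    simp only [Finset.mem_insert] at hx
    rcases hx with rfl | rfl | hx
    · simpa [hc₂, hc₁, Function.update, hvw] using hcvL
    · simpa [hc₂, Function.update] using hcwL
    · have hxv : x ≠ v := fun h => hTv (h ▸ hx)
      have hxw : x ≠ w := fun h => hTw (h ▸ hx)
      simpa [hc₂, hc₁, Function.update, hxv, hxw] using hc₀L x hx
  · -- properness
    have hc2v : c₂ v = cv := by simp [hc₂, hc₁, Function.update, hvw]
    have hc2w : c₂ w = cw := by simp [hc₂, Function.update]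
    have hc2T : ∀ x ∈ T, c₂ x = c₀ x := by
      intro x hx
      have hxv : x ≠ v := fun h => hTv (h ▸ hx)
      have hxw : x ≠ w := fun h => hTw (h ▸ hx)
      simp [hc₂, hc₁, Function.update, hxv, hxw]
    have hvy : ∀ y, y ≠ u → G.Adj v y → c₂ v ≠ c₂ y := by
      intro y hyu hadj
      by_cases hyw : y = w
      · subst hyw
        rw [hc2v, hc2w]
        intro h
        apply hcwF
        refine Finset.mem_image.2 ⟨v, ?_, ?_⟩
        · simp [hFw, huv'.symm, hadj.symm]
        · simp [hc₁, Function.update, h.symm]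
      · have hyv : y ≠ v := fun h => G.irrefl (h ▸ hadj)
        have hy2 : c₂ y = c₀ y := by simp [hc₂, hc₁, Function.update, hyv, hyw]
        rw [hc2v, hy2]
        intro h
        exact hcvF (Finset.mem_image.2 ⟨y, by simp [hFv, hyu, hadj], h.symm⟩)
    have hwy : ∀ y, y ≠ u → y ≠ w → G.Adj w y → c₂ w ≠ c₂ y := by
      intro y hyu hyw hadj
      have hy2 : c₂ y = c₁ y := by simp [hc₂, Function.update, hyw]
      rw [hc2w, hy2]
      intro h
      exact hcwF (Finset.mem_image.2 ⟨y, by simp [hFw, hyu, hadj], h.symm⟩)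
    have hTne : ∀ y ∈ T, y ≠ u := fun y hy h => hTu (h ▸ hy)
    intro x hx y hy hadj
    rw [Finset.mem_insert, Finset.mem_insert] at hx hy
    rcases hx with hx | hx | hx
    · rw [hx] at hadj ⊢
      rcases hy with hy | hy | hy
      · exact absurd (hy ▸ hadj) (G.irrefl)
      · exact hvy y (hy ▸ huw.ne') hadj
      · exact hvy y (hTne y hy) hadj
    · rw [hx] at hadj ⊢
      rcases hy with hy | hy | hy
      · rw [hy] at hadj ⊢
        exact (hvy w huw.ne' hadj.symm).symm
      · exact absurd (hy ▸ hadj) (G.irrefl)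
      · exact hwy y (hTne y hy) (fun h => hTw (h ▸ hy)) hadj
    · rcases hy with hy | hy | hy
      · rw [hy] at hadj ⊢
        exact (hvy x (hTne x hx) hadj.symm).symm
      · rw [hy] at hadj ⊢
        exact (hwy x (hTne x hx) (fun h => hTw (h ▸ hx)) hadj.symm).symm
      · rw [hc2T x hx, hc2T y hy]
        exact hc₀p x hx y hy hadj
end

section
/- Let G be a graph on n vertices with list chromatic number s and let t be a positive integer with t < s. Then for every assignment L of t-element colour lists to the vertices of G, there exists an induced subgraph of G on at least n/⌈s/t⌉ vertices that is L-list colourable. -/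
/-- For every `t`-element list assignment `L` (`0 < t < s = χ_L(G)`), a graph on
`n` vertices has an induced subgraph on at least `n/⌈s/t⌉` vertices that is
`L`-list colourable. -/
theorem partial_list_colouring_ceil_bound
    {V : Type*} [Fintype V] (G : SimpleGraph V) (s t : ℕ)
    (hs : listChromaticNumber G = s) (ht : 0 < t) (hts : t < s)
    (L : V → Finset ℕ) (hL : ∀ v, (L v).card = t) :
    ∃ S : Finset V,
      (Fintype.card V : ℚ) / (⌈(s : ℚ) / t⌉ : ℚ) ≤ S.card ∧
      ∃ c : V → ℕ, (∀ v ∈ S, c v ∈ L v) ∧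
        ∀ u ∈ S, ∀ v ∈ S, G.Adj u v → c u ≠ c v := by
  classical
  have ht0 : (0 : ℚ) < t := by exact_mod_cast ht
  have hceil1 : (1 : ℤ) ≤ ⌈(s : ℚ) / t⌉ := by
    apply Int.le_ceil_iff.mpr
    push_cast
    rw [lt_div_iff₀ ht0]
    simp only [sub_mul, one_mul]
    have : (t : ℚ) < s := by exact_mod_cast hts
    linarith
  set k : ℕ := (⌈(s : ℚ) / t⌉).toNat with hk
  have hkQ : (k : ℚ) = (⌈(s : ℚ) / t⌉ : ℚ) := by
    rw [hk]
    exact_mod_cast Int.toNat_of_nonneg (le_trans zero_le_one hceil1)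
  have hk0 : 0 < k := by
    rw [hk]; omega
  have hstk : s ≤ t * k := by
    have h1 : (s : ℚ) / t ≤ (k : ℚ) := by rw [hkQ]; exact Int.le_ceil _
    have : (s : ℚ) ≤ t * k := by rwa [div_le_iff₀ ht0, mul_comm] at h1
    exact_mod_cast this
  -- G is s-choosable
  have hchoos : Choosable G s := by
    have hne : {k | Choosable G k}.Nonempty := by
      by_contra h
      rw [Set.not_nonempty_iff_eq_empty] at h
      unfold listChromaticNumber at hs
      rw [h, Nat.sInf_empty] at hs
      omega
    have := Nat.sInf_mem hne
    unfold listChromaticNumber at hs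
    rwa [hs] at this
  -- Big lists
  set L' : V → Finset ℕ := fun v => (L v ×ˢ Finset.range k).image (fun p => k * p.1 + p.2)
    with hL'
  have hL'card : ∀ v, (L' v).card = t * k := by
    intro v
    rw [hL', Finset.card_image_of_injOn, Finset.card_product, hL v, Finset.card_range]
    intro p hp q hq hpq
    simp only [Finset.coe_product, Set.mem_prod, Finset.mem_coe, Finset.coe_range, Set.mem_Iio] at hp hq
    simp only [] at hpq
    replace hpq : k * p.1 + p.2 = k * q.1 + q.2 := hpq
    have h2 : p.2 = q.2 := by
      have h : (k * p.1 + p.2) % k = (k * q.1 + q.2) % k := by rw [hpq]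
      rwa [Nat.mul_add_mod, Nat.mul_add_mod, Nat.mod_eq_of_lt hp.2,
        Nat.mod_eq_of_lt hq.2] at h
    have h3 : p.1 = q.1 := by
      have h : (k * p.1 + p.2) / k = (k * q.1 + q.2) / k := by rw [hpq]
      rwa [Nat.mul_add_div hk0, Nat.mul_add_div hk0, Nat.div_eq_of_lt hp.2,
        Nat.div_eq_of_lt hq.2, add_zero, add_zero] at h
    exact Prod.ext h3 h2
  -- shrink to size s
  have hM : ∀ v, ∃ M : Finset ℕ, M ⊆ L' v ∧ M.card = s := by
    intro v
    have := Finset.exists_subset_card_eq (s := L' v) (n := s) (by rw [hL'card v]; exact hstk)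
    exact this
  choose M hMsub hMcard using hM
  obtain ⟨c', hc'mem, hc'adj⟩ := hchoos M hMcard
  -- decode
  have hdecode : ∀ v, c' v / k ∈ L v ∧ c' v % k < k := by
    intro v
    have : c' v ∈ L' v := hMsub v (hc'mem v)
    rw [hL'] at this
    simp only [Finset.mem_image, Finset.mem_product, Finset.mem_range] at this
    obtain ⟨⟨x, i⟩, ⟨hx, hi⟩, hxi⟩ := this
    constructor
    · rw [← hxi]; simpa [Nat.mul_add_div hk0, Nat.div_eq_of_lt hi] using hx
    · exact Nat.mod_lt _ hk0
  -- pigeonhole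
  have hpig : ∃ i ∈ Finset.range k,
      (Fintype.card V : ℚ) / k ≤ ((Finset.univ.filter (fun v => c' v % k = i)).card : ℚ) := by
    apply Finset.exists_le_card_fiber_of_nsmul_le_card_of_maps_to
    · intro v _; exact Finset.mem_range.mpr (hdecode v).2
    · exact ⟨0, Finset.mem_range.mpr hk0⟩
    · rw [Finset.card_range, Finset.card_univ, nsmul_eq_mul]
      rw [mul_div_cancel₀]
      exact_mod_cast hk0.ne'
  obtain ⟨i, _, hcard⟩ := hpig
  refine ⟨Finset.univ.filter (fun v => c' v % k = i), by rwa [hkQ] at hcard,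
    fun v => c' v / k, fun v _ => (hdecode v).1, ?_⟩
  intro u hu v hv huv hne
  simp only [Finset.mem_filter] at hu hv
  apply hc'adj u v huv
  have hne' : c' u / k = c' v / k := hne
  rw [← Nat.div_add_mod (c' u) k, ← Nat.div_add_mod (c' v) k, hne', hu.2, hv.2]
end
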